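/- arXiv:1803.05857 — 4 statements merged into one kernel-verified Lean document; each statement's English description precedes it below -/
import Mathlib

section
/- Let N, l, m be positive integers with l ≤ N − 1, N ≠ 2l and 1 ≤ m ≤ N. Then the second moments of the real and imaginary parts of X̃_l(m,N) satisfy E[(Ũ_l(m,N))²] = E[(Ṽ_l(m,N))²] = m(N − m)/(2N). -/
open MeasureTheory ProbabilityTheory Finset

lemma aux_exp_sum (N k : ℕ) (hN : 0 < N) (hk : ¬ N ∣ k) :
    ∑ n ∈ Finset.Icc 1 N, Complex.exp ((2 * Real.pi * n * k / N : ℝ) * Complex.I) = 0 := by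
  have hN0 : (N : ℝ) ≠ 0 := Nat.cast_ne_zero.mpr hN.ne'
  set ζ : ℂ := Complex.exp ((2 * Real.pi * k / N : ℝ) * Complex.I) with hζ
  have hterm : ∀ n : ℕ, Complex.exp ((2 * Real.pi * n * k / N : ℝ) * Complex.I) = ζ ^ n := by
    intro n
    rw [hζ, ← Complex.exp_nat_mul]
    congr 1
    push_cast
    ring
  have hζN : ζ ^ N = 1 := by
    rw [hζ, ← Complex.exp_nat_mul]
    have : (N : ℂ) * ((2 * Real.pi * k / N : ℝ) * Complex.I)
        = (k : ℤ) * (2 * (Real.pi : ℂ) * Complex.I) := by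
      have hNC : (N : ℂ) ≠ 0 := Nat.cast_ne_zero.mpr hN.ne'
      push_cast
      field_simp
    rw [this, Complex.exp_int_mul_two_pi_mul_I]
  have hζ1 : ζ ≠ 1 := by
    intro h
    rw [hζ, Complex.exp_eq_one_iff] at h
    obtain ⟨z, hz⟩ := h
    have hz' : ((2 * Real.pi * k / N : ℝ) : ℂ) * Complex.I
        = ((z * (2 * Real.pi) : ℝ) : ℂ) * Complex.I := by
      rw [hz]; push_cast; ring
    have hre : (2 * Real.pi * k / N : ℝ) = z * (2 * Real.pi) := by
      have := mul_right_cancel₀ Complex.I_ne_zero hz'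
      exact_mod_cast this
    have hkr : (k : ℝ) = z * N := by
      field_simp at hre
      nlinarith [Real.pi_ne_zero, Real.pi_pos, hre]
    have hki : (k : ℤ) = z * N := by exact_mod_cast hkr
    exact hk (Int.natCast_dvd_natCast.mp ⟨z, by linarith⟩)
  calc ∑ n ∈ Finset.Icc 1 N, Complex.exp ((2 * Real.pi * n * k / N : ℝ) * Complex.I)
      = ∑ n ∈ Finset.Icc 1 N, ζ ^ n := Finset.sum_congr rfl fun n _ => hterm n
    _ = ∑ i ∈ Finset.range N, ζ ^ (1 + i) := by
        rw [← Finset.Ico_add_one_right_eq_Icc, Finset.sum_Ico_eq_sum_range]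
        simp
    _ = ζ * ∑ i ∈ Finset.range N, ζ ^ i := by
        rw [Finset.mul_sum]
        exact Finset.sum_congr rfl fun i _ => by rw [pow_add, pow_one]
    _ = 0 := by
        rw [geom_sum_eq hζ1, hζN]
        simp

lemma aux_cos_sum (N k : ℕ) (hN : 0 < N) (hk : ¬ N ∣ k) :
    ∑ n ∈ Finset.Icc 1 N, Real.cos (2 * Real.pi * n * k / N) = 0 := by
  have h := congrArg Complex.re (aux_exp_sum N k hN hk)
  rw [Complex.re_sum] at h
  simp only [Complex.exp_ofReal_mul_I_re] at h
  exact h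

lemma aux_sin_sum (N k : ℕ) (hN : 0 < N) (hk : ¬ N ∣ k) :
    ∑ n ∈ Finset.Icc 1 N, Real.sin (2 * Real.pi * n * k / N) = 0 := by
  have h := congrArg Complex.im (aux_exp_sum N k hN hk)
  rw [Complex.im_sum] at h
  simp only [Complex.exp_ofReal_mul_I_im] at h
  exact h

lemma aux_not_dvd_two (N l : ℕ) (hN : 0 < N) (hl : 0 < l) (hlN : l ≤ N - 1) (hNl : N ≠ 2 * l) :
    ¬ N ∣ (2 * l) := by
  rintro ⟨c, hc⟩
  rcases Nat.lt_or_ge c 2 with h | h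
  · interval_cases c <;> omega
  · have : N * 2 ≤ N * c := Nat.mul_le_mul_left N h
    omega

lemma aux_cossq_sum (N l : ℕ) (hN : 0 < N) (hl : 0 < l) (hlN : l ≤ N - 1) (hNl : N ≠ 2 * l) :
    ∑ n ∈ Finset.Icc 1 N, Real.cos (2 * Real.pi * n * l / N) ^ 2 = N / 2 := by
  have h2 := aux_cos_sum N (2 * l) hN (aux_not_dvd_two N l hN hl hlN hNl)
  have : ∀ n ∈ Finset.Icc 1 N, Real.cos (2 * Real.pi * n * l / N) ^ 2
      = 1 / 2 + Real.cos (2 * Real.pi * n * (2 * l : ℕ) / N) / 2 := by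
    intro n _
    rw [Real.cos_sq]
    congr 2
    have hN0 : (N : ℝ) ≠ 0 := Nat.cast_ne_zero.mpr hN.ne'
    push_cast
    ring
  rw [Finset.sum_congr rfl this, Finset.sum_add_distrib, Finset.sum_const, Nat.card_Icc,
    ← Finset.sum_div, h2]
  simp
  ring

lemma aux_sinsq_sum (N l : ℕ) (hN : 0 < N) (hl : 0 < l) (hlN : l ≤ N - 1) (hNl : N ≠ 2 * l) :
    ∑ n ∈ Finset.Icc 1 N, Real.sin (2 * Real.pi * n * l / N) ^ 2 = N / 2 := by
  have hc := aux_cossq_sum N l hN hl hlN hNl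
  have : ∀ n ∈ Finset.Icc 1 N, Real.sin (2 * Real.pi * n * l / N) ^ 2
      = 1 - Real.cos (2 * Real.pi * n * l / N) ^ 2 := fun n _ => Real.sin_sq _
  rw [Finset.sum_congr rfl this, Finset.sum_sub_distrib, hc, Finset.sum_const, Nat.card_Icc]
  simp
  ring


lemma aux_moment
    {Ω : Type*} [MeasurableSpace Ω] (P : Measure Ω) [IsProbabilityMeasure P]
    (N m : ℕ) (hN : 0 < N) (hm : 1 ≤ m) (hmN : m ≤ N)
    (B : ℕ → Ω → ℝ) (hBmeas : ∀ n, Measurable (B n))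
    (hBindep : iIndepFun (fun i : Fin N => B (i.1 + 1)) P)
    (hB1 : ∀ n ∈ Finset.Icc 1 N, P {ω | B n ω = 1} = (m : ENNReal) / N)
    (hB0 : ∀ n ∈ Finset.Icc 1 N, P {ω | B n ω = 0} = 1 - (m : ENNReal) / N)
    (c : ℕ → ℝ) :
    ∫ ω, (∑ n ∈ Finset.Icc 1 N, c n * B n ω) ^ 2 ∂P
      = ((m : ℝ)/N - (m/N) * (m/N)) * ∑ n ∈ Finset.Icc 1 N, (c n) ^ 2
        + ((m : ℝ)/N) * ((m : ℝ)/N) * (∑ n ∈ Finset.Icc 1 N, c n) ^ 2 := by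
  set p : ℝ := (m : ℝ) / N with hp
  have hN0 : (N : ℝ) ≠ 0 := Nat.cast_ne_zero.mpr hN.ne'
  have htoReal : ((m : ENNReal) / N).toReal = p := by
    rw [ENNReal.toReal_div]; simp [hp]
  -- a.e. Bernoulli values
  have key01 : ∀ n ∈ Finset.Icc 1 N, ∀ᵐ ω ∂P, B n ω = 0 ∨ B n ω = 1 := by
    intro n hn
    have hs1 : MeasurableSet {ω | B n ω = 1} := hBmeas n (measurableSet_singleton 1)
    have hs0 : MeasurableSet {ω | B n ω = 0} := hBmeas n (measurableSet_singleton 0)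
    have hdisj : Disjoint {ω | B n ω = 1} {ω | B n ω = 0} := by
      rw [Set.disjoint_left]
      intro ω h1 h0
      simp only [Set.mem_setOf_eq] at h1 h0
      rw [h1] at h0; norm_num at h0
    have hle : (m : ENNReal) / N ≤ 1 := by
      apply ENNReal.div_le_of_le_mul
      rw [one_mul]
      exact_mod_cast hmN
    have hu : P ({ω | B n ω = 1} ∪ {ω | B n ω = 0}) = 1 := by
      rw [measure_union hdisj hs0, hB1 n hn, hB0 n hn, add_tsub_cancel_of_le hle]
    have hcompl : P ({ω | B n ω = 1} ∪ {ω | B n ω = 0})ᶜ = 0 := by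
      rw [measure_compl (hs1.union hs0) (measure_ne_top P _), hu, measure_univ, tsub_self]
    have hae : ∀ᵐ ω ∂P, ω ∈ {ω | B n ω = 1} ∪ {ω | B n ω = 0} := by
      rw [ae_iff]
      convert hcompl using 2
      rfl
    filter_upwards [hae] with ω hω
    rcases hω with h | h
    · right; exact h
    · left; exact h
  have hIntB : ∀ n ∈ Finset.Icc 1 N, Integrable (B n) P := by
    intro n hn
    refine Integrable.mono' (integrable_const 1) (hBmeas n).aestronglyMeasurable ?_
    filter_upwards [key01 n hn] with ω hω
    rcases hω with h | h <;> rw [h] <;> norm_num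
  have hMean : ∀ n ∈ Finset.Icc 1 N, ∫ ω, B n ω ∂P = p := by
    intro n hn
    have hInd : (fun ω => B n ω)
        =ᵐ[P] Set.indicator {ω | B n ω = 1} (fun _ => (1 : ℝ)) := by
      filter_upwards [key01 n hn] with ω hω
      rcases hω with h | h
      · rw [h, Set.indicator_of_notMem]
        simp [Set.mem_setOf_eq, h]
      · rw [h, Set.indicator_of_mem]
        exact h
    have hms : MeasurableSet {ω | B n ω = 1} := hBmeas n (measurableSet_singleton 1)
    rw [integral_congr_ae hInd, integral_indicator_const _ hms,
      measureReal_def, hB1 n hn, htoReal, smul_eq_mul, mul_one]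
  have hIntMul : ∀ n ∈ Finset.Icc 1 N, ∀ n' ∈ Finset.Icc 1 N,
      Integrable (fun ω => B n ω * B n' ω) P := by
    intro n hn n' hn'
    refine Integrable.mono' (integrable_const 1)
      ((hBmeas n).mul (hBmeas n')).aestronglyMeasurable ?_
    filter_upwards [key01 n hn, key01 n' hn'] with ω h1 h2
    rcases h1 with h | h <;> rcases h2 with h' | h' <;> rw [h, h'] <;> norm_num
  have hMulMean : ∀ n ∈ Finset.Icc 1 N, ∀ n' ∈ Finset.Icc 1 N,
      ∫ ω, B n ω * B n' ω ∂P = if n = n' then p else p * p := by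
    intro n hn n' hn'
    simp only [Finset.mem_Icc] at hn hn'
    by_cases hne : n = n'
    · subst hne
      simp only [if_pos rfl]
      have heq : (fun ω => B n ω * B n ω) =ᵐ[P] fun ω => B n ω := by
        filter_upwards [key01 n (Finset.mem_Icc.mpr hn)] with ω hω
        rcases hω with h | h <;> rw [h] <;> norm_num
      rw [integral_congr_ae heq]
      exact hMean n (Finset.mem_Icc.mpr hn)
    · rw [if_neg hne]
      have hij : (⟨n - 1, by omega⟩ : Fin N) ≠ (⟨n' - 1, by omega⟩ : Fin N) := by
        simp only [Ne, Fin.mk.injEq]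
        omega
      have hindep := hBindep.indepFun hij
      change IndepFun (B (n - 1 + 1)) (B (n' - 1 + 1)) P at hindep
      have e1 : n - 1 + 1 = n := by omega
      have e2 : n' - 1 + 1 = n' := by omega
      rw [e1, e2] at hindep
      have := hindep.integral_mul_eq_mul_integral
        (hIntB n (Finset.mem_Icc.mpr hn)).aestronglyMeasurable
        (hIntB n' (Finset.mem_Icc.mpr hn')).aestronglyMeasurable
      rw [hMean n (Finset.mem_Icc.mpr hn), hMean n' (Finset.mem_Icc.mpr hn')] at this
      exact this
  -- expand the square
  have expand : ∀ ω, (∑ n ∈ Finset.Icc 1 N, c n * B n ω) ^ 2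
      = ∑ n ∈ Finset.Icc 1 N, ∑ n' ∈ Finset.Icc 1 N,
          (c n * c n') * (B n ω * B n' ω) := by
    intro ω
    rw [sq, Finset.sum_mul_sum]
    exact Finset.sum_congr rfl fun n _ => Finset.sum_congr rfl fun n' _ => by ring
  simp_rw [expand]
  rw [integral_finset_sum _ (fun n hn => integrable_finset_sum _
    (fun n' hn' => ((hIntMul n hn n' hn').const_mul _)))]
  have step1 : ∀ n ∈ Finset.Icc 1 N,
      ∫ ω, ∑ n' ∈ Finset.Icc 1 N, (c n * c n') * (B n ω * B n' ω) ∂P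
        = c n * c n * (p - p * p) + p * p * (c n * ∑ n' ∈ Finset.Icc 1 N, c n') := by
    intro n hn
    rw [integral_finset_sum _ (fun n' hn' => ((hIntMul n hn n' hn').const_mul _))]
    have : ∀ n' ∈ Finset.Icc 1 N,
        ∫ ω, (c n * c n') * (B n ω * B n' ω) ∂P
          = (if n = n' then c n * c n' * (p - p * p) else 0) + c n * c n' * (p * p) := by
      intro n' hn'
      rw [integral_const_mul, hMulMean n hn n' hn']
      split <;> ring
    rw [Finset.sum_congr rfl this, Finset.sum_add_distrib, Finset.sum_ite_eq, if_pos hn]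
    congr 1
    simp only [Finset.mul_sum]
    exact Finset.sum_congr rfl fun x _ => by ring
  rw [Finset.sum_congr rfl step1, Finset.sum_add_distrib]
  congr 1
  · rw [← Finset.sum_mul, mul_comm]
    congr 1
    exact Finset.sum_congr rfl fun x _ => (sq (c x)).symm
  · rw [← Finset.mul_sum, ← Finset.sum_mul]
    ring

theorem stmt_3
    {Ω : Type*} [MeasurableSpace Ω] (P : Measure Ω) [IsProbabilityMeasure P]
    (N l m : ℕ) (hN : 0 < N) (hl : 0 < l) (hlN : l ≤ N - 1) (hNl : N ≠ 2 * l) (hm : 1 ≤ m)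
    (hmN : m ≤ N)
    (B : ℕ → Ω → ℝ) (hBmeas : ∀ n, Measurable (B n))
    (hBindep : iIndepFun (fun i : Fin N => B (i.1 + 1)) P)
    (hB1 : ∀ n ∈ Finset.Icc 1 N, P {ω | B n ω = 1} = (m : ENNReal) / N)
    (hB0 : ∀ n ∈ Finset.Icc 1 N, P {ω | B n ω = 0} = 1 - (m : ENNReal) / N)
    (U : Ω → ℝ)
    (hU : U = fun ω => ∑ n ∈ Finset.Icc 1 N, Real.cos (2 * Real.pi * n * l / N) * B n ω)
    (V : Ω → ℝ)
    (hV : V = fun ω => -∑ n ∈ Finset.Icc 1 N, Real.sin (2 * Real.pi * n * l / N) * B n ω) :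
    (∫ ω, (U ω) ^ 2 ∂P) = (m : ℝ) * ((N : ℝ) - m) / (2 * N) ∧
    (∫ ω, (V ω) ^ 2 ∂P) = (m : ℝ) * ((N : ℝ) - m) / (2 * N) := by
  have hN0 : (N : ℝ) ≠ 0 := Nat.cast_ne_zero.mpr hN.ne'
  have hNdl : ¬ N ∣ l := by
    intro h
    have := Nat.le_of_dvd hl h
    omega
  have hcos0 := aux_cos_sum N l hN hNdl
  have hsin0 := aux_sin_sum N l hN hNdl
  have hcossq := aux_cossq_sum N l hN hl hlN hNl
  have hsinsq := aux_sinsq_sum N l hN hl hlN hNl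
  have hfinal : ((m : ℝ)/N - (m/N) * (m/N)) * ((N : ℝ) / 2)
      + ((m : ℝ)/N) * ((m : ℝ)/N) * (0 : ℝ) ^ 2 = (m : ℝ) * ((N : ℝ) - m) / (2 * N) := by
    field_simp
    ring
  constructor
  · have h := aux_moment P N m hN hm hmN B hBmeas hBindep hB1 hB0
      (fun n => Real.cos (2 * Real.pi * n * l / N))
    simp only [hcossq, hcos0] at h
    simp only [hU]
    rw [h]
    exact hfinal
  · have h := aux_moment P N m hN hm hmN B hBmeas hBindep hB1 hB0
      (fun n => Real.sin (2 * Real.pi * n * l / N))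
    simp only [hsinsq, hsin0] at h
    simp only [hV, neg_sq]
    rw [h]
    exact hfinal
end

section
/- Let N, l, m be positive integers with l ≤ N − 1, N ≠ 2l and 1 ≤ m ≤ N. Then for every nonnegative real number t, P(| |X̃_l(m,N)| − E[|X̃_l(m,N)|] | ≥ t) ≤ 2·exp(−2t²/N), where |X̃_l(m,N)| denotes the complex modulus of X̃_l(m,N). -/
open MeasureTheory ProbabilityTheory Finset


lemma bern_mgf_core {p : ℝ} (hp0 : 0 ≤ p) (hp1 : p ≤ 1) (x : ℝ) :
    (1 - p) + p * Real.exp x ≤ Real.exp (p * x + x ^ 2 / 8) := by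
  set u : ℝ → ℝ := fun y => 1 - p + p * Real.exp y with hu
  have hupos : ∀ y, 0 < u y := by
    intro y
    rcases lt_or_eq_of_le hp0 with h | h
    · have := Real.exp_pos y
      simp only [hu]; nlinarith
    · simp only [hu, ← h]; norm_num
  -- φ y = log (u y) - p*y - y^2/8 ; ψ = φ'
  set ψ : ℝ → ℝ := fun y => p * Real.exp y / u y - p - y / 4 with hψ
  set φ : ℝ → ℝ := fun y => Real.log (u y) - (p * y + y ^ 2 / 8) with hφ
  have hud : ∀ y, HasDerivAt u (p * Real.exp y) y := by
    intro y
    exact ((Real.hasDerivAt_exp y).const_mul p).const_add (1 - p)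
  have hφd : ∀ y, HasDerivAt φ (ψ y) y := by
    intro y
    have h1 : HasDerivAt (fun y => Real.log (u y)) (p * Real.exp y / u y) y :=
      (hud y).log (ne_of_gt (hupos y))
    have h2 : HasDerivAt (fun y => p * y + y ^ 2 / 8) (p + y / 4) y := by
      have := ((hasDerivAt_pow 2 y).div_const 8).const_add 0
      have h3 : HasDerivAt (fun y : ℝ => p * y) p y := by
        simpa using (hasDerivAt_id y).const_mul p
      exact h3.add (((hasDerivAt_pow 2 y).div_const 8).congr_deriv (by ring))
    exact (h1.sub h2).congr_deriv (by show _ = p * Real.exp y / u y - p - y / 4; ring)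
  have hψd : ∀ y, HasDerivAt ψ (p * Real.exp y * (1 - p) / (u y) ^ 2 - 1 / 4) y := by
    intro y
    have h1 : HasDerivAt (fun y => p * Real.exp y / u y)
        ((p * Real.exp y * u y - p * Real.exp y * (p * Real.exp y)) / (u y) ^ 2) y :=
      ((Real.hasDerivAt_exp y).const_mul p).div (hud y) (ne_of_gt (hupos y))
    have heq : (p * Real.exp y * u y - p * Real.exp y * (p * Real.exp y)) / (u y) ^ 2
        = p * Real.exp y * (1 - p) / (u y) ^ 2 := by
      have : u y = 1 - p + p * Real.exp y := rfl
      rw [this]; ring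
    rw [heq] at h1
    have h2 : HasDerivAt (fun y : ℝ => p + y / 4) (1 / 4) y := by
      simpa using ((hasDerivAt_id y).div_const 4).const_add p
    have e : ψ = fun y => p * Real.exp y / u y - (p + y / 4) := by
      funext z; simp only [hψ]; ring
    rw [e]
    exact h1.sub h2
  have hψ_nonpos_deriv : ∀ y, p * Real.exp y * (1 - p) / (u y) ^ 2 - 1 / 4 ≤ 0 := by
    intro y
    have hu2 : 0 < (u y) ^ 2 := pow_pos (hupos y) 2
    rw [sub_nonpos, div_le_iff₀ hu2]
    have : u y = 1 - p + p * Real.exp y := rfl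
    nlinarith [sq_nonneg (1 - p - p * Real.exp y), Real.exp_pos y]
  have hψanti : Antitone ψ := by
    have : ∀ y, deriv ψ y ≤ 0 := fun y => (hψd y).deriv ▸ hψ_nonpos_deriv y
    exact antitone_of_deriv_nonpos (fun y => (hψd y).differentiableAt) this
  have hψ0 : ψ 0 = 0 := by simp [hψ, hu]
  have hφ0 : φ 0 = 0 := by simp [hφ, hu]
  have hφle : ∀ y, φ y ≤ 0 := by
    intro y
    rcases le_or_gt 0 y with h | h
    · -- φ antitone on [0, ∞)
      have : AntitoneOn φ (Set.Ici 0) := by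
        apply antitoneOn_of_deriv_nonpos (convex_Ici 0)
        · exact fun z _ => (hφd z).differentiableAt.continuousAt.continuousWithinAt
        · exact fun z _ => (hφd z).differentiableAt.differentiableWithinAt
        · intro z hz
          rw [(hφd z).deriv]
          have : (0:ℝ) ≤ z := by simpa using interior_subset hz
          calc ψ z ≤ ψ 0 := hψanti this
            _ = 0 := hψ0
      have := this (Set.self_mem_Ici) (Set.mem_Ici.2 h) h
      simpa [hφ0] using this
    · have : MonotoneOn φ (Set.Iic 0) := by
        apply monotoneOn_of_deriv_nonneg (convex_Iic 0)
        · exact fun z _ => (hφd z).differentiableAt.continuousAt.continuousWithinAt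
        · exact fun z _ => (hφd z).differentiableAt.differentiableWithinAt
        · intro z hz
          rw [(hφd z).deriv]
          have hz0 : z ≤ (0:ℝ) := by
            have := interior_subset hz; simpa using this
          calc (0:ℝ) = ψ 0 := hψ0.symm
            _ ≤ ψ z := hψanti hz0
      have := this (Set.mem_Iic.2 h.le) (Set.self_mem_Iic) h.le
      simpa [hφ0] using this
  have := hφle x
  have hx : Real.log (u x) ≤ p * x + x ^ 2 / 8 := by
    simpa [hφ, sub_nonpos] using this
  calc (1 - p) + p * Real.exp x = u x := rfl
    _ = Real.exp (Real.log (u x)) := (Real.exp_log (hupos x)).symm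
    _ ≤ Real.exp (p * x + x ^ 2 / 8) := Real.exp_le_exp.2 hx


lemma two_point_hoeffding {p : ℝ} (hp0 : 0 ≤ p) (hp1 : p ≤ 1) {a b : ℝ}
    (hab : |b - a| ≤ 1) (L : ℝ) :
    (1 - p) * Real.exp (L * a) + p * Real.exp (L * b)
      ≤ Real.exp (L * ((1 - p) * a + p * b) + L ^ 2 / 8) := by
  have h1 := bern_mgf_core hp0 hp1 (L * (b - a))
  have h2 : ((1 - p) + p * Real.exp (L * (b - a))) * Real.exp (L * a)
      ≤ Real.exp (p * (L * (b - a)) + (L * (b - a)) ^ 2 / 8) * Real.exp (L * a) :=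
    mul_le_mul_of_nonneg_right h1 (Real.exp_pos _).le
  have h3 : ((1 - p) + p * Real.exp (L * (b - a))) * Real.exp (L * a)
      = (1 - p) * Real.exp (L * a) + p * Real.exp (L * b) := by
    rw [add_mul, mul_assoc, ← Real.exp_add]; ring_nf
  have h4 : Real.exp (p * (L * (b - a)) + (L * (b - a)) ^ 2 / 8) * Real.exp (L * a)
      = Real.exp (L * ((1 - p) * a + p * b) + (L * (b - a)) ^ 2 / 8) := by
    rw [← Real.exp_add]; ring_nf
  have h5 : (L * (b - a)) ^ 2 ≤ L ^ 2 := by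
    have : (b - a) ^ 2 ≤ 1 := by
      have := abs_nonneg (b - a)
      nlinarith [sq_abs (b - a)]
    nlinarith [sq_nonneg L]
  calc (1 - p) * Real.exp (L * a) + p * Real.exp (L * b)
      = ((1 - p) + p * Real.exp (L * (b - a))) * Real.exp (L * a) := h3.symm
    _ ≤ Real.exp (L * ((1 - p) * a + p * b) + (L * (b - a)) ^ 2 / 8) := h4 ▸ h2
    _ ≤ Real.exp (L * ((1 - p) * a + p * b) + L ^ 2 / 8) := by
        apply Real.exp_le_exp.2; linarith

section Mc
variable {p : ℝ}

noncomputable def wgt (p : ℝ) : Bool → ℝ := fun b => if b then p else 1 - p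

noncomputable def W (p : ℝ) {n : ℕ} (b : Fin n → Bool) : ℝ := ∏ i, wgt p (b i)

lemma W_nonneg (hp0 : 0 ≤ p) (hp1 : p ≤ 1) {n : ℕ} (b : Fin n → Bool) : 0 ≤ W p b :=
  Finset.prod_nonneg fun i _ => by rcases b i with _|_ <;> simp [wgt] <;> linarith

lemma W_cons {n : ℕ} (x : Bool) (b : Fin n → Bool) :
    W p (Fin.cons x b) = wgt p x * W p b := by
  rw [W, Fin.prod_univ_succ]
  simp [W, Fin.cons_zero, Fin.cons_succ]

lemma sum_cons_decomp {n : ℕ} (F : (Fin (n+1) → Bool) → ℝ) :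
    ∑ b : Fin (n+1) → Bool, F b
      = ∑ b : Fin n → Bool, (F (Fin.cons false b) + F (Fin.cons true b)) := by
  rw [← (Fin.consEquiv (fun _ : Fin (n+1) => Bool)).sum_comp F]
  rw [Fintype.sum_prod_type_right]
  congr 1
  ext b
  simp [Fin.consEquiv, add_comm]

lemma mcdiarmid_mgf (hp0 : 0 ≤ p) (hp1 : p ≤ 1) :
    ∀ {n : ℕ} (f : (Fin n → Bool) → ℝ),
    (∀ (i : Fin n) (b : Fin n → Bool),
      |f (Function.update b i true) - f (Function.update b i false)| ≤ 1) →
    ∀ L : ℝ,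
    ∑ b, W p b * Real.exp (L * f b)
      ≤ Real.exp (L * (∑ b, W p b * f b) + L ^ 2 * n / 8) := by
  intro n
  induction n with
  | zero =>
    intro f hf L
    simp [Fintype.sum_unique, W]
  | succ n ih =>
    intro f hf L
    set g : (Fin n → Bool) → ℝ :=
      fun b => (1 - p) * f (Fin.cons false b) + p * f (Fin.cons true b) with hg
    have hdiff : ∀ b : Fin n → Bool, |f (Fin.cons true b) - f (Fin.cons false b)| ≤ 1 := by
      intro b
      have := hf 0 (Fin.cons false b)
      rwa [Fin.update_cons_zero, Fin.update_cons_zero] at this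
    have hgbd : ∀ (i : Fin n) (b : Fin n → Bool),
        |g (Function.update b i true) - g (Function.update b i false)| ≤ 1 := by
      intro i b
      have e1 : ∀ (x : Bool) (v : Bool),
          Fin.cons x (Function.update b i v)
            = Function.update (Fin.cons x b : Fin (n+1) → Bool) i.succ v := by
        intro x v; exact @Fin.cons_update n (fun _ => Bool) x b i v
      rw [hg]
      have h1 := hf i.succ (Fin.cons false b)
      have h2 := hf i.succ (Fin.cons true b)
      rw [← e1 false true, ← e1 false false] at h1
      rw [← e1 true true, ← e1 true false] at h2
      calc |((1 - p) * f (Fin.cons false (Function.update b i true))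
              + p * f (Fin.cons true (Function.update b i true)))
            - ((1 - p) * f (Fin.cons false (Function.update b i false))
              + p * f (Fin.cons true (Function.update b i false)))|
          = |(1 - p) * (f (Fin.cons false (Function.update b i true))
              - f (Fin.cons false (Function.update b i false)))
            + p * (f (Fin.cons true (Function.update b i true))
              - f (Fin.cons true (Function.update b i false)))| := by ring_nf
        _ ≤ (1 - p) * |f (Fin.cons false (Function.update b i true))
              - f (Fin.cons false (Function.update b i false))|
            + p * |f (Fin.cons true (Function.update b i true))
              - f (Fin.cons true (Function.update b i false))| := by
            refine (abs_add_le _ _).trans ?_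
            rw [abs_mul, abs_mul, abs_of_nonneg (by linarith : (0:ℝ) ≤ 1 - p),
              abs_of_nonneg hp0]
        _ ≤ (1 - p) * 1 + p * 1 :=
            add_le_add (mul_le_mul_of_nonneg_left h1 (by linarith))
              (mul_le_mul_of_nonneg_left h2 hp0)
        _ = 1 := by ring
    have hEdecomp : ∀ (h : (Fin (n+1) → Bool) → ℝ),
        ∑ b, W p b * h b
          = ∑ b : Fin n → Bool, W p b * ((1 - p) * h (Fin.cons false b) + p * h (Fin.cons true b)) := by
      intro h
      rw [sum_cons_decomp (fun b => W p b * h b)]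
      congr 1; ext b
      rw [W_cons, W_cons]
      simp [wgt]; ring
    have key : ∀ b : Fin n → Bool,
        (1 - p) * Real.exp (L * f (Fin.cons false b)) + p * Real.exp (L * f (Fin.cons true b))
          ≤ Real.exp (L * g b + L ^ 2 / 8) :=
      fun b => two_point_hoeffding hp0 hp1 (hdiff b) L
    calc ∑ b, W p b * Real.exp (L * f b)
        = ∑ b : Fin n → Bool, W p b * ((1 - p) * Real.exp (L * f (Fin.cons false b))
            + p * Real.exp (L * f (Fin.cons true b))) := hEdecomp _
      _ ≤ ∑ b : Fin n → Bool, W p b * Real.exp (L * g b + L ^ 2 / 8) := by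
          apply Finset.sum_le_sum
          intro b _
          exact mul_le_mul_of_nonneg_left (key b) (W_nonneg hp0 hp1 b)
      _ = Real.exp (L ^ 2 / 8) * ∑ b : Fin n → Bool, W p b * Real.exp (L * g b) := by
          rw [Finset.mul_sum]
          congr 1; ext b
          rw [Real.exp_add]; ring
      _ ≤ Real.exp (L ^ 2 / 8) * Real.exp (L * (∑ b, W p b * g b) + L ^ 2 * n / 8) := by
          apply mul_le_mul_of_nonneg_left (ih g hgbd L) (Real.exp_pos _).le
      _ = Real.exp (L * (∑ b, W p b * f b) + L ^ 2 * (n + 1 : ℕ) / 8) := by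
          rw [← Real.exp_add, hEdecomp f]
          congr 1
          push_cast
          ring
end Mc




lemma mcdiarmid_one_sided {p : ℝ} (hp0 : 0 ≤ p) (hp1 : p ≤ 1) {n : ℕ} (hn : 0 < n)
    (f : (Fin n → Bool) → ℝ)
    (hf : ∀ (i : Fin n) (b : Fin n → Bool),
      |f (Function.update b i true) - f (Function.update b i false)| ≤ 1)
    {t : ℝ} (ht : 0 ≤ t) :
    ∑ b ∈ univ.filter (fun b => t ≤ f b - ∑ b', W p b' * f b'), W p b
      ≤ Real.exp (-(2 * t ^ 2) / n) := by
  set E := ∑ b', W p b' * f b' with hE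
  set L : ℝ := 4 * t / n with hL
  have hL0 : 0 ≤ L := by positivity
  have step1 : ∑ b ∈ univ.filter (fun b => t ≤ f b - E), W p b
      ≤ ∑ b ∈ univ.filter (fun b => t ≤ f b - E), W p b * Real.exp (L * (f b - E - t)) := by
    apply Finset.sum_le_sum
    intro b hb
    rw [Finset.mem_filter] at hb
    have h1 : (1:ℝ) ≤ Real.exp (L * (f b - E - t)) := by
      rw [← Real.exp_zero]
      apply Real.exp_le_exp.2
      have : 0 ≤ f b - E - t := by linarith [hb.2]
      positivity
    nlinarith [W_nonneg hp0 hp1 b]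
  have step2 : ∑ b ∈ univ.filter (fun b => t ≤ f b - E), W p b * Real.exp (L * (f b - E - t))
      ≤ ∑ b, W p b * Real.exp (L * (f b - E - t)) := by
    apply Finset.sum_le_sum_of_subset_of_nonneg (Finset.filter_subset _ _)
    intro b _ _
    have := W_nonneg hp0 hp1 b
    positivity
  have step3 : ∑ b, W p b * Real.exp (L * (f b - E - t))
      = (∑ b, W p b * Real.exp (L * f b)) * Real.exp (-(L * E + L * t)) := by
    rw [Finset.sum_mul]
    congr 1; ext b
    rw [mul_assoc, ← Real.exp_add]
    congr 2; ring
  have step4 : (∑ b, W p b * Real.exp (L * f b)) * Real.exp (-(L * E + L * t))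
      ≤ Real.exp (L * E + L ^ 2 * n / 8) * Real.exp (-(L * E + L * t)) :=
    mul_le_mul_of_nonneg_right (mcdiarmid_mgf hp0 hp1 f hf L) (Real.exp_pos _).le
  have step5 : Real.exp (L * E + L ^ 2 * n / 8) * Real.exp (-(L * E + L * t))
      = Real.exp (L ^ 2 * n / 8 - L * t) := by
    rw [← Real.exp_add]; ring_nf
  have step6 : L ^ 2 * n / 8 - L * t = -(2 * t ^ 2) / n := by
    have hn' : (n : ℝ) ≠ 0 := Nat.cast_ne_zero.2 hn.ne'
    field_simp [hL]
    rw [hL]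
    field_simp
    ring
  calc ∑ b ∈ univ.filter (fun b => t ≤ f b - E), W p b
      ≤ _ := step1
    _ ≤ _ := step2
    _ = _ := step3
    _ ≤ _ := step4
    _ = Real.exp (L ^ 2 * n / 8 - L * t) := step5
    _ = Real.exp (-(2 * t ^ 2) / n) := by rw [step6]

lemma mcdiarmid_two_sided {p : ℝ} (hp0 : 0 ≤ p) (hp1 : p ≤ 1) {n : ℕ} (hn : 0 < n)
    (f : (Fin n → Bool) → ℝ)
    (hf : ∀ (i : Fin n) (b : Fin n → Bool),
      |f (Function.update b i true) - f (Function.update b i false)| ≤ 1)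
    {t : ℝ} (ht : 0 ≤ t) :
    ∑ b ∈ univ.filter (fun b => t ≤ |f b - ∑ b', W p b' * f b'|), W p b
      ≤ 2 * Real.exp (-(2 * t ^ 2) / n) := by
  set E := ∑ b', W p b' * f b' with hE
  have hnegf : ∀ (i : Fin n) (b : Fin n → Bool),
      |(-f) (Function.update b i true) - (-f) (Function.update b i false)| ≤ 1 := by
    intro i b
    have : (-f) (Function.update b i true) - (-f) (Function.update b i false)
        = -(f (Function.update b i true) - f (Function.update b i false)) := by
      simp; ring
    rw [this, abs_neg]
    exact hf i b
  have hEneg : ∑ b', W p b' * (-f) b' = -E := by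
    rw [hE, ← Finset.sum_neg_distrib]
    exact Finset.sum_congr rfl fun b _ => by simp
  have h1 := mcdiarmid_one_sided hp0 hp1 hn f hf ht
  have h2 := mcdiarmid_one_sided hp0 hp1 hn (-f) hnegf ht
  rw [hEneg] at h2
  have hsub : univ.filter (fun b => t ≤ |f b - E|)
      ⊆ univ.filter (fun b => t ≤ f b - E) ∪ univ.filter (fun b => t ≤ (-f) b - (-E)) := by
    intro b hb
    rw [Finset.mem_filter] at hb
    rw [Finset.mem_union, Finset.mem_filter, Finset.mem_filter]
    rcases abs_cases (f b - E) with ⟨h, _⟩ | ⟨h, _⟩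
    · left; exact ⟨Finset.mem_univ b, by linarith [hb.2]⟩
    · right; refine ⟨Finset.mem_univ b, ?_⟩
      simp only [Pi.neg_apply]
      linarith [hb.2]
  calc ∑ b ∈ univ.filter (fun b => t ≤ |f b - E|), W p b
      ≤ ∑ b ∈ (univ.filter (fun b => t ≤ f b - E) ∪ univ.filter (fun b => t ≤ (-f) b - (-E))),
          W p b := by
        apply Finset.sum_le_sum_of_subset_of_nonneg hsub
        intro b _ _; exact W_nonneg hp0 hp1 b
    _ ≤ (∑ b ∈ univ.filter (fun b => t ≤ f b - E), W p b)
        + ∑ b ∈ univ.filter (fun b => t ≤ (-f) b - (-E)), W p b := by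
        have key : (∑ b ∈ (univ.filter (fun b => t ≤ f b - E) ∪
              univ.filter (fun b => t ≤ (-f) b - (-E))), W p b)
            + ∑ b ∈ (univ.filter (fun b => t ≤ f b - E) ∩
              univ.filter (fun b => t ≤ (-f) b - (-E))), W p b
            = (∑ b ∈ univ.filter (fun b => t ≤ f b - E), W p b)
            + ∑ b ∈ univ.filter (fun b => t ≤ (-f) b - (-E)), W p b :=
          Finset.sum_union_inter
        have hnn : 0 ≤ ∑ b ∈ (univ.filter (fun b => t ≤ f b - E) ∩
            univ.filter (fun b => t ≤ (-f) b - (-E))), W p b :=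
          Finset.sum_nonneg fun b _ => W_nonneg hp0 hp1 b
        linarith
    _ ≤ Real.exp (-(2 * t ^ 2) / n) + Real.exp (-(2 * t ^ 2) / n) := add_le_add h1 h2
    _ = 2 * Real.exp (-(2 * t ^ 2) / n) := by ring




lemma sum_Icc_one_fin (M : ℕ) (g : ℕ → ℂ) :
    ∑ n ∈ Finset.Icc 1 M, g n = ∑ i : Fin M, g (i.1 + 1) := by
  induction M with
  | zero => simp
  | succ M ih =>
    rw [Finset.sum_Icc_succ_top (by omega), ih, Fin.sum_univ_castSucc]
    simp

theorem stmt_6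
    {Ω : Type*} [MeasurableSpace Ω] (P : Measure Ω) [IsProbabilityMeasure P]
    (N l m : ℕ) (hN : 0 < N) (hl : 0 < l) (hlN : l ≤ N - 1) (hNl : N ≠ 2 * l) (hm : 1 ≤ m)
    (hmN : m ≤ N)
    (B : ℕ → Ω → ℝ) (hBmeas : ∀ n, Measurable (B n))
    (hBindep : iIndepFun (fun i : Fin N => B (i.1 + 1)) P)
    (hB1 : ∀ n ∈ Finset.Icc 1 N, P {ω | B n ω = 1} = (m : ENNReal) / N)
    (hB0 : ∀ n ∈ Finset.Icc 1 N, P {ω | B n ω = 0} = 1 - (m : ENNReal) / N)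
    (X : Ω → ℂ)
    (hX : X = fun ω => ∑ n ∈ Finset.Icc 1 N,
      Complex.exp (-(2 * (Real.pi : ℂ) * n * l / N) * Complex.I) * (B n ω : ℂ)) :
    ∀ t : ℝ, 0 ≤ t →
      P {ω | t ≤ |‖X ω‖ - ∫ ω', ‖X ω'‖ ∂P|}
        ≤ ENNReal.ofReal (2 * Real.exp (-(2 * t ^ 2) / N)) := by
  intro t ht
  classical
  set p : ℝ := (m : ℝ) / N with hp
  have hN0 : (N : ℝ) ≠ 0 := Nat.cast_ne_zero.2 hN.ne'
  have hp0 : 0 ≤ p := by positivity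
  have hp1 : p ≤ 1 := by
    rw [hp, div_le_one (by positivity)]
    exact_mod_cast hmN
  -- the ENNReal Bernoulli parameter
  set q : ENNReal := (m : ENNReal) / N with hq
  have hq1 : q ≤ 1 := by
    rw [hq, ENNReal.div_le_iff (by exact_mod_cast hN.ne') (by simp)]
    simpa using (by exact_mod_cast hmN : (m : ENNReal) ≤ N)
  have hqtop : q ≠ ⊤ := by
    rw [hq]
    exact (ENNReal.div_lt_top (by simp) (by exact_mod_cast hN.ne')).ne
  have hqre : q.toReal = p := by
    rw [hq, hp, ENNReal.toReal_div]
    simp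
  have h1qre : (1 - q).toReal = 1 - p := by
    rw [ENNReal.toReal_sub_of_le hq1 (by simp), hqre]
    simp
  -- coefficients
  set coeff : ℕ → ℂ := fun n =>
    Complex.exp (-(2 * (Real.pi : ℂ) * n * l / N) * Complex.I) with hcoeff
  have hcoeff_abs : ∀ n, ‖coeff n‖ = 1 := by
    intro n
    have : -(2 * (Real.pi : ℂ) * n * l / N) = ((-(2 * Real.pi * n * l / N) : ℝ) : ℂ) := by
      push_cast; ring
    rw [hcoeff]
    simp only [this]
    exact Complex.norm_exp_ofReal_mul_I _
  -- the function on the boolean cube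
  set f : (Fin N → Bool) → ℝ := fun b =>
    ‖∑ i : Fin N, coeff (i.1 + 1) * (if b i then 1 else 0)‖ with hf
  -- bounded differences
  have hfbd : ∀ (i : Fin N) (b : Fin N → Bool),
      |f (Function.update b i true) - f (Function.update b i false)| ≤ 1 := by
    intro i b
    rw [hf]
    refine (abs_norm_sub_norm_le _ _).trans ?_
    rw [← Finset.sum_sub_distrib]
    have hterm : ∀ j : Fin N, j ≠ i →
        coeff (j.1 + 1) * (if Function.update b i true j then 1 else 0)
          - coeff (j.1 + 1) * (if Function.update b i false j then 1 else 0) = 0 := by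
      intro j hj
      rw [Function.update_of_ne hj, Function.update_of_ne hj]
      ring
    rw [Finset.sum_eq_single i (fun j _ hj => hterm j hj) (by simp)]
    rw [Function.update_self, Function.update_self]
    simp [hcoeff_abs]
  -- the Bernoulli measure on Bool and the product measure
  set μb : Measure Bool := q • Measure.dirac true + (1 - q) • Measure.dirac false with hμb
  have hμbtrue : μb {true} = q := by
    rw [hμb]
    simp [Measure.dirac_apply' _ (measurableSet_singleton _)]
  have hμbfalse : μb {false} = 1 - q := by
    rw [hμb]
    simp [Measure.dirac_apply' _ (measurableSet_singleton _)]
  have hμbuniv : μb Set.univ = 1 := by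
    have : (Set.univ : Set Bool) = {true} ∪ {false} := by
      ext x; rcases x with _|_ <;> simp
    rw [this, measure_union (by simp) (measurableSet_singleton _), hμbtrue, hμbfalse]
    rw [add_comm]
    exact tsub_add_cancel_of_le hq1
  haveI : IsProbabilityMeasure μb := ⟨hμbuniv⟩
  set π : Measure (Fin N → Bool) := Measure.pi (fun _ => μb) with hπ
  haveI : IsProbabilityMeasure π := by
    rw [hπ]; infer_instance
  have hπsingle : ∀ b : Fin N → Bool, π {b} = ∏ i, μb {b i} := by
    intro b
    rw [hπ, show ({b} : Set (Fin N → Bool)) = Set.pi Set.univ (fun i => {b i}) by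
      ext c; simp [funext_iff, Set.mem_pi]]
    exact Measure.pi_pi _ _
  have hWtoReal : ∀ b : Fin N → Bool, (π {b}).toReal = W p b := by
    intro b
    rw [hπsingle, ENNReal.toReal_prod, W]
    refine Finset.prod_congr rfl fun i _ => ?_
    rcases hbi : b i with _|_
    · rw [hμbfalse, h1qre]; simp [wgt]
    · rw [hμbtrue, hqre]; simp [wgt]
  -- the map to the boolean cube
  set Y : Ω → (Fin N → Bool) := fun ω i => if B (i.1 + 1) ω = 1 then true else false with hY
  have hYmeas : Measurable Y := by
    rw [hY]
    apply measurable_pi_lambda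
    intro i
    exact Measurable.ite (hBmeas _ (measurableSet_singleton 1)) measurable_const measurable_const
  -- independence of the coordinates
  have hYindep : iIndepFun
      (fun i : Fin N => fun ω => Y ω i) P := by
    have := hBindep.comp (fun _ : Fin N => fun x : ℝ => if x = 1 then true else false)
      (fun _ => Measurable.ite (measurableSet_singleton 1) measurable_const measurable_const)
    exact this
  -- marginals
  have hmarg : ∀ (i : Fin N) (v : Bool), P ((fun ω => Y ω i) ⁻¹' {v}) = μb {v} := by
    intro i v
    have hmem : i.1 + 1 ∈ Finset.Icc 1 N := by
      simp [Finset.mem_Icc]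
    have hms : MeasurableSet {ω | B (i.1 + 1) ω = 1} := hBmeas _ (measurableSet_singleton 1)
    rcases v with _|_
    · -- false
      have : ((fun ω => Y ω i) ⁻¹' {false}) = {ω | B (i.1 + 1) ω = 1}ᶜ := by
        ext ω
        simp [hY]
      rw [this, measure_compl hms (measure_ne_top _ _),
        measure_univ, hB1 _ hmem, hμbfalse]
    · have : ((fun ω => Y ω i) ⁻¹' {true}) = {ω | B (i.1 + 1) ω = 1} := by
        ext ω
        simp [hY]
      rw [this, hB1 _ hmem, hμbtrue]
  -- the law of Y is π
  have hmap : P.map Y = π := by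
    apply Measure.ext_of_singleton
    intro b
    rw [Measure.map_apply hYmeas (Set.Countable.measurableSet (Set.countable_singleton b)),
      hπsingle]
    have hpre : Y ⁻¹' {b} = ⋂ i ∈ Finset.univ, (fun ω => Y ω i) ⁻¹' {b i} := by
      ext ω
      simp [funext_iff]
    rw [hpre, hYindep.measure_inter_preimage_eq_mul Finset.univ
      (sets := fun i => {b i}) (fun i _ => Set.Countable.measurableSet (Set.countable_singleton _))]
    exact Finset.prod_congr rfl fun i _ => hmarg i (b i)
  -- a.e. identity
  have hae : ∀ᵐ ω ∂P, ‖X ω‖ = f (Y ω) := by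
    have hval : ∀ᵐ ω ∂P, ∀ n, n ∈ Finset.Icc 1 N → (B n ω = 0 ∨ B n ω = 1) := by
      rw [ae_all_iff]
      intro n
      by_cases hn : n ∈ Finset.Icc 1 N
      · have hdisj : Disjoint {ω | B n ω = 1} {ω | B n ω = 0} := by
          rw [Set.disjoint_left]
          intro ω h1 h0
          simp only [Set.mem_setOf_eq] at h1 h0
          rw [h1] at h0; norm_num at h0
        have hC : P ({ω | B n ω = 1} ∪ {ω | B n ω = 0}) = 1 := by
          rw [measure_union hdisj (hBmeas _ (measurableSet_singleton 0)),
            hB1 _ hn, hB0 _ hn]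
          exact add_tsub_cancel_of_le hq1
        have hmeasU : MeasurableSet ({ω | B n ω = 1} ∪ {ω | B n ω = 0}) :=
          (hBmeas _ (measurableSet_singleton 1)).union (hBmeas _ (measurableSet_singleton 0))
        have h0 : P ({ω | B n ω = 1} ∪ {ω | B n ω = 0})ᶜ = 0 := by
          rw [measure_compl hmeasU (measure_ne_top _ _), hC, measure_univ, tsub_self]
        have := (MeasureTheory.ae_iff.2 ?_ :
            ∀ᵐ ω ∂P, ω ∈ ({ω | B n ω = 1} ∪ {ω | B n ω = 0}))
        · refine this.mono fun ω hω _ => ?_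
          rcases hω with h | h
          · exact Or.inr h
          · exact Or.inl h
        · exact h0
      · exact Filter.Eventually.of_forall fun ω hmem => absurd hmem hn
    refine hval.mono fun ω hω => ?_
    rw [hX, hf]
    congr 1
    refine (sum_Icc_one_fin N _).trans ?_
    refine Finset.sum_congr rfl fun i _ => ?_
    have hmem : i.1 + 1 ∈ Finset.Icc 1 N := by
      simp only [Finset.mem_Icc]; omega
    simp only [hcoeff]
    congr 1
    rcases hω (i.1 + 1) hmem with h | h
    · have hYi : Y ω i = false := by
        rw [hY]
        simp only
        rw [if_neg (by rw [h]; norm_num)]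
      rw [hYi, h]
      norm_num
    · have hYi : Y ω i = true := by
        rw [hY]
        simp only
        rw [if_pos h]
      rw [hYi, h]
      norm_num
  -- value of the integral
  set Ef : ℝ := ∑ b, W p b * f b with hEf
  have hfmeas : Measurable f := measurable_of_countable f
  have hI : (∫ ω', ‖X ω'‖ ∂P) = Ef := by
    rw [integral_congr_ae hae, ← integral_map hYmeas.aemeasurable
      hfmeas.aestronglyMeasurable, hmap, integral_fintype (Integrable.of_finite),
      hEf]
    exact Finset.sum_congr rfl fun b _ => by rw [Measure.real_def, hWtoReal, smul_eq_mul]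
  rw [hI]
  -- event identification
  set A : Set (Fin N → Bool) := {b | t ≤ |f b - Ef|} with hA
  have hAmeas : MeasurableSet A := (Set.to_countable A).measurableSet
  have hPA : P {ω | t ≤ |‖X ω‖ - Ef|} = π A := by
    have h1 : P {ω | t ≤ |‖X ω‖ - Ef|} = P (Y ⁻¹' A) := by
      apply measure_congr
      apply Filter.eventuallyEq_set.2
      filter_upwards [hae] with ω h
      simp only [Set.mem_setOf_eq, Set.mem_preimage, hA, h]
    rw [h1, ← Measure.map_apply hYmeas hAmeas, hmap]
  rw [hPA]
  -- finite sum computation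
  set A' : Finset (Fin N → Bool) := univ.filter (fun b => t ≤ |f b - Ef|) with hA'
  have hAU : A = ⋃ b ∈ A', ({b} : Set (Fin N → Bool)) := by
    ext b
    simp [hA, hA']
  have hπA : π A = ∑ b ∈ A', π {b} := by
    rw [hAU]
    exact measure_biUnion_finset
      (fun b _ c _ hbc => by simpa [Set.disjoint_singleton] using hbc)
      (fun b _ => measurableSet_singleton b)
  have hπb : ∀ b : Fin N → Bool, π {b} = ENNReal.ofReal (W p b) := by
    intro b
    rw [← hWtoReal b, ENNReal.ofReal_toReal (measure_ne_top π _)]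
  rw [hπA]
  calc ∑ b ∈ A', π {b} = ∑ b ∈ A', ENNReal.ofReal (W p b) :=
        Finset.sum_congr rfl fun b _ => hπb b
    _ = ENNReal.ofReal (∑ b ∈ A', W p b) :=
        (ENNReal.ofReal_sum_of_nonneg fun b _ => W_nonneg hp0 hp1 b).symm
    _ ≤ ENNReal.ofReal (2 * Real.exp (-(2 * t ^ 2) / N)) := by
        apply ENNReal.ofReal_le_ofReal
        have := mcdiarmid_two_sided hp0 hp1 hN f hfbd ht
        rw [hA', hEf]
        exact this
end

section
/- Let N, l, m be positive integers with l ≤ N − 1, N ≠ 2l and 1 ≤ m ≤ N, and set K₀ = √N·(√(2e) + √(2e + 4))/4. Then E[exp((Ũ_l(m,N))²/K₀²)] ≤ 2; consequently the sub-Gaussian norm of Ũ_l(m,N), defined as inf{K > 0 : E[exp((Ũ_l(m,N))²/K²)] ≤ 2}, is at most √N·(√(2e) + √(2e + 4))/4. -/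
open MeasureTheory ProbabilityTheory Finset

lemma trig_sum_zero (N k : ℕ) (hN : 0 < N) (hk : ¬ (N ∣ k)) :
    ∑ n ∈ Finset.Icc 1 N, Real.cos (2 * Real.pi * n * k / N) = 0 := by
  set θ : ℝ := 2 * Real.pi * k / N with hθ
  set ζ : ℂ := Complex.exp (θ * Complex.I) with hζ
  have hN' : (N : ℝ) ≠ 0 := Nat.cast_ne_zero.mpr hN.ne'
  have hζnorm : ∀ n : ℕ, (ζ ^ n).re = Real.cos (2 * Real.pi * n * k / N) := by
    intro n
    rw [hζ, ← Complex.exp_nat_mul]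
    have : (n : ℂ) * (↑θ * Complex.I) = ((n * θ : ℝ) : ℂ) * Complex.I := by push_cast; ring
    rw [this, Complex.exp_ofReal_mul_I_re]
    congr 1
    rw [hθ]; ring
  have hζN : ζ ^ N = 1 := by
    rw [hζ, ← Complex.exp_nat_mul]
    have : (N : ℂ) * (↑θ * Complex.I) = (k : ℤ) * (2 * ↑Real.pi * Complex.I) := by
      have hNc : (N : ℂ) ≠ 0 := Nat.cast_ne_zero.mpr hN.ne'
      rw [hθ]
      push_cast
      field_simp
    rw [this, Complex.exp_int_mul_two_pi_mul_I]
  have hζne : ζ ≠ 1 := by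
    intro h
    rw [hζ, Complex.exp_eq_one_iff] at h
    obtain ⟨j, hj⟩ := h
    have h2 : (θ : ℂ) = j * (2 * Real.pi) := by
      have := mul_right_cancel₀ Complex.I_ne_zero (hj.trans (by ring : (j : ℂ) * (2 * ↑Real.pi * Complex.I) = ((j : ℂ) * (2 * ↑Real.pi)) * Complex.I))
      exact this
    have hθr : θ = j * (2 * Real.pi) := by exact_mod_cast h2
    rw [hθ] at hθr
    have h2π : (2 * Real.pi) ≠ 0 := by positivity
    have hkr : (k : ℝ) = j * N := by
      have : 2 * Real.pi * ((k : ℝ) / N) = 2 * Real.pi * (j : ℝ) := by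
        rw [show 2 * Real.pi * ((k : ℝ) / N) = 2 * Real.pi * (k : ℝ) / N by ring, hθr]; ring
      have h3 := mul_left_cancel₀ h2π this
      field_simp at h3
      linarith
    have hint : (k : ℤ) = N * j := by
      have : (k : ℝ) = ((N * j : ℤ) : ℝ) := by push_cast; linarith
      exact_mod_cast this
    exact hk (Int.natCast_dvd_natCast.mp ⟨j, hint⟩)
  have hsum : ∑ n ∈ Finset.Icc 1 N, ζ ^ n = 0 := by
    rw [← Finset.Ico_add_one_right_eq_Icc, Finset.sum_Ico_eq_sum_range]
    norm_num
    have : ∀ i, ζ ^ (1 + i) = ζ * ζ ^ i := fun i => by rw [pow_add, pow_one]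
    simp_rw [this, ← Finset.mul_sum]
    rw [geom_sum_eq hζne, hζN]
    simp
  calc ∑ n ∈ Finset.Icc 1 N, Real.cos (2 * Real.pi * n * k / N)
      = (∑ n ∈ Finset.Icc 1 N, ζ ^ n).re := by
        rw [Complex.re_sum]
        exact Finset.sum_congr rfl fun n _ => (hζnorm n).symm
    _ = 0 := by rw [hsum]; simp

lemma exp_mul_le_convex (a y : ℝ) (h1 : -1 ≤ y) (h2 : y ≤ 1) :
    Real.exp (a * y) ≤ (1 - y) / 2 * Real.exp (-a) + (1 + y) / 2 * Real.exp a := by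
  have hθ1 : (0:ℝ) ≤ (1 - y) / 2 := by linarith
  have hθ2 : (0:ℝ) ≤ (1 + y) / 2 := by linarith
  have hs : (1 - y) / 2 + (1 + y) / 2 = 1 := by ring
  have := convexOn_exp.2 (Set.mem_univ (-a)) (Set.mem_univ a) hθ1 hθ2 hs
  simp only [smul_eq_mul] at this
  have harg : (1 - y) / 2 * (-a) + (1 + y) / 2 * a = a * y := by ring
  rwa [harg] at this

lemma bern_mgf_le (p a : ℝ) (hp0 : 0 ≤ p) (hp1 : p ≤ 1) :
    (1 - p) + p * Real.exp a ≤ Real.exp (p * a + a ^ 2 / 2) := by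
  have key : (1 - p) * Real.exp (-(p * a)) + p * Real.exp ((1 - p) * a) ≤ Real.exp (a ^ 2 / 2) := by
    have h1 := exp_mul_le_convex a (-p) (by linarith) (by linarith)
    have h2 := exp_mul_le_convex a (1 - p) (by linarith) (by linarith)
    have hcosh : (Real.exp (-a) + Real.exp a) / 2 ≤ Real.exp (a ^ 2 / 2) := by
      have := Real.cosh_le_exp_half_sq a
      rw [Real.cosh_eq] at this; linarith
    have e1 : Real.exp (a * -p) = Real.exp (-(p * a)) := by ring_nf
    have e2 : Real.exp (a * (1 - p)) = Real.exp ((1 - p) * a) := by ring_nf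
    rw [e1] at h1; rw [e2] at h2
    nlinarith [Real.exp_pos a, Real.exp_pos (-a), mul_le_mul_of_nonneg_left h1 (by linarith : (0:ℝ) ≤ 1 - p), mul_le_mul_of_nonneg_left h2 hp0]
  have hmul := mul_le_mul_of_nonneg_left key (Real.exp_pos (p * a)).le
  calc (1 - p) + p * Real.exp a
      = Real.exp (p * a) * ((1 - p) * Real.exp (-(p * a)) + p * Real.exp ((1 - p) * a)) := by
        have q1 : Real.exp (p * a) * Real.exp (-(p * a)) = 1 := by
          rw [← Real.exp_add]; simp
        have q2 : Real.exp (p * a) * Real.exp ((1 - p) * a) = Real.exp a := by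
          rw [← Real.exp_add]; congr 1; ring
        linear_combination (-(1:ℝ) + p) * q1 - p * q2
    _ ≤ Real.exp (p * a) * Real.exp (a ^ 2 / 2) := hmul
    _ = Real.exp (p * a + a ^ 2 / 2) := (Real.exp_add _ _).symm

lemma gauss_lintegral_linear (c : ℝ) :
    ∫⁻ x : ℝ, ENNReal.ofReal (Real.exp (c * x - x ^ 2 / 2)) =
      ENNReal.ofReal (Real.sqrt (2 * Real.pi) * Real.exp (c ^ 2 / 2)) := by
  have hfun : ∀ x : ℝ, Real.exp (c * x - x ^ 2 / 2)
      = Real.exp (c ^ 2 / 2) * Real.exp (-(1/2) * (x - c) ^ 2) := by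
    intro x
    rw [← Real.exp_add]
    congr 1
    ring
  have hint : Integrable (fun x : ℝ => Real.exp (c * x - x ^ 2 / 2)) := by
    simp_rw [hfun]
    exact ((integrable_exp_neg_mul_sq (by norm_num : (0:ℝ) < 1/2)).comp_sub_right c).const_mul _
  rw [← ofReal_integral_eq_lintegral_ofReal hint (Filter.Eventually.of_forall fun x => (Real.exp_pos _).le)]
  congr 1
  calc ∫ x : ℝ, Real.exp (c * x - x ^ 2 / 2)
      = ∫ x : ℝ, Real.exp (c ^ 2 / 2) * Real.exp (-(1/2) * (x - c) ^ 2) := by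
        exact integral_congr_ae (Filter.Eventually.of_forall hfun)
    _ = Real.exp (c ^ 2 / 2) * ∫ x : ℝ, Real.exp (-(1/2) * (x - c) ^ 2) := integral_const_mul _ _
    _ = Real.exp (c ^ 2 / 2) * ∫ x : ℝ, Real.exp (-(1/2) * x ^ 2) := by
        rw [integral_sub_right_eq_self (fun x => Real.exp (-(1/2) * x ^ 2)) c]
    _ = Real.exp (c ^ 2 / 2) * Real.sqrt (Real.pi / (1/2)) := by rw [integral_gaussian]
    _ = Real.sqrt (2 * Real.pi) * Real.exp (c ^ 2 / 2) := by
        rw [show Real.pi / (1/2) = 2 * Real.pi by ring]; ring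

lemma gauss_lintegral_sq (s : ℝ) (hs : s ≤ 3/8) :
    ∫⁻ x : ℝ, ENNReal.ofReal (Real.exp (s * x ^ 2) * Real.exp (-(x ^ 2) / 2)) ≤
      ENNReal.ofReal (2 * Real.sqrt (2 * Real.pi)) := by
  have hb : (0:ℝ) < 1/2 - s := by linarith
  have hfun : ∀ x : ℝ, Real.exp (s * x ^ 2) * Real.exp (-(x ^ 2) / 2)
      = Real.exp (-(1/2 - s) * x ^ 2) := by
    intro x
    rw [← Real.exp_add]
    congr 1
    ring
  have hint : Integrable (fun x : ℝ => Real.exp (-(1/2 - s) * x ^ 2)) :=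
    integrable_exp_neg_mul_sq hb
  simp_rw [hfun]
  rw [← ofReal_integral_eq_lintegral_ofReal hint (Filter.Eventually.of_forall fun x => (Real.exp_pos _).le)]
  apply ENNReal.ofReal_le_ofReal
  rw [integral_gaussian]
  have h1 : Real.pi / (1/2 - s) ≤ 8 * Real.pi := by
    rw [div_le_iff₀ hb]
    nlinarith [Real.pi_pos]
  calc Real.sqrt (Real.pi / (1/2 - s)) ≤ Real.sqrt (8 * Real.pi) := Real.sqrt_le_sqrt h1
    _ = 2 * Real.sqrt (2 * Real.pi) := by
        rw [show (8:ℝ) * Real.pi = 2^2 * (2 * Real.pi) by ring, Real.sqrt_mul (by positivity), Real.sqrt_sq (by norm_num)]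

lemma bern_ae {Ω : Type*} [MeasurableSpace Ω] (P : Measure Ω) [IsProbabilityMeasure P]
    (B : Ω → ℝ) (hB : Measurable B) (q : ENNReal) (hq1 : q ≤ 1)
    (hp : P {ω | B ω = 1} = q) (hq : P {ω | B ω = 0} = 1 - q) :
    ∀ᵐ ω ∂P, B ω = 1 ∨ B ω = 0 := by
  have hA1 : MeasurableSet {ω | B ω = 1} := hB (measurableSet_singleton 1)
  have hA0 : MeasurableSet {ω | B ω = 0} := hB (measurableSet_singleton 0)
  have hdisj : Disjoint {ω | B ω = 1} {ω | B ω = 0} := by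
    rw [Set.disjoint_left]
    intro ω h1 h0
    simp only [Set.mem_setOf_eq] at h1 h0
    rw [h1] at h0; norm_num at h0
  have hunion : P ({ω | B ω = 1} ∪ {ω | B ω = 0}) = 1 := by
    rw [measure_union hdisj hA0, hp, hq, add_tsub_cancel_of_le hq1]
  have hcompl : P ({ω | B ω = 1} ∪ {ω | B ω = 0})ᶜ = 0 := by
    rw [measure_compl (hA1.union hA0) (measure_ne_top _ _), hunion, measure_univ, tsub_self]
  filter_upwards [MeasureTheory.measure_eq_zero_iff_ae_notMem.mp hcompl] with ω hω
  simpa [Set.mem_union, Set.mem_setOf_eq] using not_not.mp hω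

lemma bern_integral {Ω : Type*} [MeasurableSpace Ω] (P : Measure Ω) [IsProbabilityMeasure P]
    (B : Ω → ℝ) (hB : Measurable B) (p : ℝ) (hp0 : 0 ≤ p) (hp1 : p ≤ 1)
    (hp : P {ω | B ω = 1} = ENNReal.ofReal p) (hq : P {ω | B ω = 0} = 1 - ENNReal.ofReal p)
    (a : ℝ) :
    ∫ ω, Real.exp (a * B ω) ∂P = (1 - p) + p * Real.exp a := by
  have hq1 : ENNReal.ofReal p ≤ 1 := ENNReal.ofReal_le_one.mpr hp1
  have hae := bern_ae P B hB _ hq1 hp hq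
  have hA1 : MeasurableSet {ω | B ω = 1} := hB (measurableSet_singleton 1)
  have hA0 : MeasurableSet {ω | B ω = 0} := hB (measurableSet_singleton 0)
  set g : Ω → ℝ := fun ω =>
    Set.indicator {ω | B ω = 1} (fun _ => Real.exp a) ω
      + Set.indicator {ω | B ω = 0} (fun _ => (1:ℝ)) ω with hg
  have hfg : (fun ω => Real.exp (a * B ω)) =ᵐ[P] g := by
    filter_upwards [hae] with ω hω
    rcases hω with h1 | h0
    · have hni : ω ∉ {ω | B ω = 0} := by simp [Set.mem_setOf_eq, h1]
      simp [hg, Set.indicator_of_mem (show ω ∈ {ω | B ω = 1} by simpa [Set.mem_setOf_eq] using h1),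
        Set.indicator_of_notMem hni, h1]
    · have hni : ω ∉ {ω | B ω = 1} := by simp [Set.mem_setOf_eq, h0]
      simp [hg, Set.indicator_of_mem (show ω ∈ {ω | B ω = 0} by simpa [Set.mem_setOf_eq] using h0),
        Set.indicator_of_notMem hni, h0]
  rw [integral_congr_ae hfg, hg]
  rw [integral_add ((integrable_const _).indicator hA1) ((integrable_const _).indicator hA0)]
  rw [integral_indicator_const _ hA1, integral_indicator_const _ hA0, measureReal_def, measureReal_def, hp, hq]
  rw [ENNReal.toReal_ofReal hp0]
  have : (1 - ENNReal.ofReal p).toReal = 1 - p := by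
    rw [ENNReal.toReal_sub_of_le hq1 ENNReal.one_ne_top, ENNReal.toReal_one,
      ENNReal.toReal_ofReal hp0]
  rw [this]
  simp [smul_eq_mul]
  ring

lemma sum_fin_icc {M : Type*} [AddCommMonoid M] (N : ℕ) (f : ℕ → M) :
    ∑ i : Fin N, f (i.1 + 1) = ∑ n ∈ Finset.Icc 1 N, f n := by
  rw [← Finset.Ico_add_one_right_eq_Icc, Finset.sum_Ico_eq_sum_range, Nat.add_sub_cancel,
    Fin.sum_univ_eq_sum_range (fun k => f (k + 1)) N]
  exact Finset.sum_congr rfl fun k _ => by rw [Nat.add_comm]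

lemma mgf_U_le
    {Ω : Type*} [MeasurableSpace Ω] (P : Measure Ω) [IsProbabilityMeasure P]
    (N l m : ℕ) (hN : 0 < N) (hl : 0 < l) (hlN : l ≤ N - 1) (hNl : N ≠ 2 * l) (hm : 1 ≤ m)
    (hmN : m ≤ N)
    (B : ℕ → Ω → ℝ) (hBmeas : ∀ n, Measurable (B n))
    (hBindep : iIndepFun (fun i : Fin N => B (i.1 + 1)) P)
    (hB1 : ∀ n ∈ Finset.Icc 1 N, P {ω | B n ω = 1} = (m : ENNReal) / N)
    (hB0 : ∀ n ∈ Finset.Icc 1 N, P {ω | B n ω = 0} = 1 - (m : ENNReal) / N)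
    (U : Ω → ℝ)
    (hU : U = fun ω => ∑ n ∈ Finset.Icc 1 N, Real.cos (2 * Real.pi * n * l / N) * B n ω)
    (t : ℝ) :
    ∫ ω, Real.exp (t * U ω) ∂P ≤ Real.exp (t ^ 2 * N / 4) := by
  set c : ℕ → ℝ := fun n => Real.cos (2 * Real.pi * n * l / N) with hc
  set p : ℝ := (m : ℝ) / N with hp
  have hNr : (0:ℝ) < N := Nat.cast_pos.mpr hN
  have hp0 : 0 ≤ p := by positivity
  have hp1 : p ≤ 1 := by
    rw [hp, div_le_one hNr]
    exact_mod_cast hmN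
  have hpe : (m : ENNReal) / N = ENNReal.ofReal p := by
    rw [hp, ENNReal.ofReal_div_of_pos hNr]
    simp [ENNReal.ofReal_natCast]
  -- trig sums
  have hNdl : ¬ (N ∣ l) := by
    intro ⟨q, hq⟩
    rcases Nat.eq_zero_or_pos q with h | h
    · subst h; simp at hq; omega
    · have : N ≤ l := by calc N = N * 1 := (mul_one N).symm
                            _ ≤ N * q := Nat.mul_le_mul_left N h
                            _ = l := hq.symm
      omega
  have hNd2l : ¬ (N ∣ 2 * l) := by
    intro ⟨q, hq⟩
    have hlt : l < N := by omega
    have h2l : 0 < 2 * l := by omega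
    rcases Nat.lt_or_ge q 2 with h | h
    · interval_cases q <;> omega
    · nlinarith [hq]
  have hc0 : ∑ n ∈ Finset.Icc 1 N, c n = 0 := trig_sum_zero N l hN hNdl
  have hc2 : ∑ n ∈ Finset.Icc 1 N, (c n) ^ 2 = (N : ℝ) / 2 := by
    have hterm : ∀ n : ℕ, (c n) ^ 2 = 1 / 2 + Real.cos (2 * Real.pi * n * (2 * (l:ℝ)) / N) / 2 := by
      intro n
      rw [hc]
      simp only
      rw [Real.cos_sq]
      congr 2
      push_cast
      ring
    have hz : ∑ n ∈ Finset.Icc 1 N, Real.cos (2 * Real.pi * n * (2 * (l:ℝ)) / N) = 0 := by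
      have := trig_sum_zero N (2 * l) hN hNd2l
      push_cast at this
      convert this using 2 with n
    calc ∑ n ∈ Finset.Icc 1 N, (c n) ^ 2
        = ∑ n ∈ Finset.Icc 1 N, (1 / 2 + Real.cos (2 * Real.pi * n * (2 * (l:ℝ)) / N) / 2) :=
          Finset.sum_congr rfl fun n _ => hterm n
      _ = (N : ℝ) / 2 := by
          rw [Finset.sum_add_distrib, Finset.sum_const, ← Finset.sum_div, hz,
            Nat.card_Icc, Nat.add_sub_cancel, nsmul_eq_mul]
          ring
  have hcabs : ∀ n, |c n| ≤ 1 := fun n => Real.abs_cos_le_one _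
  -- the independent family
  set Y : Fin N → Ω → ℝ := fun i ω => c (i.1 + 1) * B (i.1 + 1) ω with hY
  have hYmeas : ∀ i, Measurable (Y i) := fun i => (hBmeas _).const_mul _
  have hYindep : iIndepFun Y P :=
    hBindep.comp (fun i x => c (i.1 + 1) * x) (fun i => measurable_id.const_mul _)
  have hUY : U = ∑ i : Fin N, Y i := by
    funext ω
    rw [hU]
    simp only [Finset.sum_apply]
    rw [← sum_fin_icc N (fun n => c n * B n ω)]
  have hmgf : mgf U P t = ∏ i : Fin N, mgf (Y i) P t := by
    rw [hUY]
    exact hYindep.mgf_sum hYmeas Finset.univ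
  have heach : ∀ i : Fin N, mgf (Y i) P t = (1 - p) + p * Real.exp (t * c (i.1 + 1)) := by
    intro i
    have hmem : i.1 + 1 ∈ Finset.Icc 1 N := by
      simp only [Finset.mem_Icc]
      exact ⟨Nat.le_add_left 1 i.1, by omega⟩
    have := bern_integral P (B (i.1 + 1)) (hBmeas _) p hp0 hp1
      (by rw [hB1 _ hmem, hpe]) (by rw [hB0 _ hmem, hpe]) (t * c (i.1 + 1))
    rw [mgf]
    rw [← this]
    congr 1
    funext ω
    rw [hY]
    simp only
    ring_nf
  have hbound : ∀ i : Fin N, mgf (Y i) P t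
      ≤ Real.exp (p * (t * c (i.1 + 1)) + (t * c (i.1 + 1)) ^ 2 / 2) := by
    intro i
    rw [heach i]
    exact bern_mgf_le p (t * c (i.1 + 1)) hp0 hp1
  have hnn : ∀ i : Fin N, 0 ≤ mgf (Y i) P t := fun i => mgf_nonneg
  calc ∫ ω, Real.exp (t * U ω) ∂P = mgf U P t := rfl
    _ = ∏ i : Fin N, mgf (Y i) P t := hmgf
    _ ≤ ∏ i : Fin N, Real.exp (p * (t * c (i.1 + 1)) + (t * c (i.1 + 1)) ^ 2 / 2) :=
        Finset.prod_le_prod (fun i _ => hnn i) (fun i _ => hbound i)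
    _ = Real.exp (∑ i : Fin N, (p * (t * c (i.1 + 1)) + (t * c (i.1 + 1)) ^ 2 / 2)) :=
        (Real.exp_sum _ _).symm
    _ = Real.exp (t ^ 2 * N / 4) := by
        congr 1
        have h1 : ∑ i : Fin N, (p * (t * c (i.1 + 1)) + (t * c (i.1 + 1)) ^ 2 / 2)
            = p * t * (∑ i : Fin N, c (i.1 + 1)) + t ^ 2 / 2 * (∑ i : Fin N, (c (i.1 + 1)) ^ 2) := by
          rw [Finset.mul_sum, Finset.mul_sum, ← Finset.sum_add_distrib]
          exact Finset.sum_congr rfl fun i _ => by ring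
        rw [h1, sum_fin_icc N c, sum_fin_icc N (fun n => (c n) ^ 2), hc0, hc2]
        ring

theorem stmt_11
    {Ω : Type*} [MeasurableSpace Ω] (P : Measure Ω) [IsProbabilityMeasure P]
    (N l m : ℕ) (hN : 0 < N) (hl : 0 < l) (hlN : l ≤ N - 1) (hNl : N ≠ 2 * l) (hm : 1 ≤ m)
    (hmN : m ≤ N)
    (B : ℕ → Ω → ℝ) (hBmeas : ∀ n, Measurable (B n))
    (hBindep : iIndepFun (fun i : Fin N => B (i.1 + 1)) P)
    (hB1 : ∀ n ∈ Finset.Icc 1 N, P {ω | B n ω = 1} = (m : ENNReal) / N)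
    (hB0 : ∀ n ∈ Finset.Icc 1 N, P {ω | B n ω = 0} = 1 - (m : ENNReal) / N)
    (U : Ω → ℝ)
    (hU : U = fun ω => ∑ n ∈ Finset.Icc 1 N, Real.cos (2 * Real.pi * n * l / N) * B n ω) :
    (∫ ω, Real.exp ((U ω) ^ 2 / (Real.sqrt N * (Real.sqrt (2 * Real.exp 1) + Real.sqrt (2 * Real.exp 1 + 4)) / 4) ^ 2) ∂P) ≤ 2 ∧
    sInf {K : ℝ | 0 < K ∧ (∫ ω, Real.exp ((U ω) ^ 2 / K ^ 2) ∂P) ≤ 2}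
      ≤ Real.sqrt N * (Real.sqrt (2 * Real.exp 1) + Real.sqrt (2 * Real.exp 1 + 4)) / 4 := by
  have hNr : (0:ℝ) < N := Nat.cast_pos.mpr hN
  set Q : ℝ := Real.sqrt (2 * Real.exp 1) + Real.sqrt (2 * Real.exp 1 + 4) with hQdef
  set K : ℝ := Real.sqrt N * Q / 4 with hKdef
  -- measurability of U
  have hUmeas : Measurable U := by
    rw [hU]
    exact Finset.measurable_sum _ (fun n _ => (hBmeas n).const_mul _)
  -- bounds on constants
  have he2 : (2:ℝ) ≤ Real.exp 1 := by
    have := Real.add_one_le_exp 1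
    linarith
  have hQ1 : (2:ℝ) ≤ Real.sqrt (2 * Real.exp 1) := by
    have h4 : (4:ℝ) ≤ 2 * Real.exp 1 := by linarith
    nlinarith [Real.sq_sqrt (by positivity : (0:ℝ) ≤ 2 * Real.exp 1),
      Real.sqrt_nonneg (2 * Real.exp 1)]
  have hQ2 : 2 * Real.sqrt 2 ≤ Real.sqrt (2 * Real.exp 1 + 4) := by
    have h8 : (8:ℝ) ≤ 2 * Real.exp 1 + 4 := by linarith
    nlinarith [Real.sq_sqrt (by positivity : (0:ℝ) ≤ 2 * Real.exp 1 + 4),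
      Real.sqrt_nonneg (2 * Real.exp 1 + 4), Real.sq_sqrt (by norm_num : (0:ℝ) ≤ 2),
      Real.sqrt_nonneg 2]
  have hsqrt2 : (7:ℝ)/5 ≤ Real.sqrt 2 := by
    nlinarith [Real.sq_sqrt (by norm_num : (0:ℝ) ≤ 2), Real.sqrt_nonneg 2]
  have hQsq : 64/3 ≤ Q ^ 2 := by
    have hQge : 2 + 2 * Real.sqrt 2 ≤ Q := by rw [hQdef]; linarith
    nlinarith [Real.sq_sqrt (by norm_num : (0:ℝ) ≤ 2), Real.sqrt_nonneg 2]
  have hQpos : 0 < Q := by linarith [hQ1, hQ2, hsqrt2]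
  have hKpos : 0 < K := by
    rw [hKdef]
    have : 0 < Real.sqrt N := Real.sqrt_pos.mpr hNr
    positivity
  have hK2 : K ^ 2 = N * Q ^ 2 / 16 := by
    rw [hKdef]
    rw [div_pow, mul_pow, Real.sq_sqrt hNr.le]
    norm_num
  set s : ℝ := N / (2 * K ^ 2) with hsdef
  have hs38 : s ≤ 3/8 := by
    rw [hsdef, hK2]
    rw [div_le_iff₀ (by positivity)]
    nlinarith
  -- a.e. boundedness of U
  have hq1 : (m : ENNReal) / N ≤ 1 := by
    apply ENNReal.div_le_of_le_mul
    rw [one_mul]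
    exact_mod_cast Nat.cast_le.mpr hmN
  have haeB : ∀ᵐ ω ∂P, ∀ n ∈ Finset.Icc 1 N, (B n ω = 1 ∨ B n ω = 0) := by
    have h := (MeasureTheory.ae_ball_iff (Finset.Icc 1 N : Finset ℕ).countable_toSet).mpr
      (fun n hn => bern_ae P (B n) (hBmeas n) _ hq1 (hB1 n (Finset.mem_coe.mp hn)) (hB0 n (Finset.mem_coe.mp hn)))
    filter_upwards [h] with ω hω n hn
    exact hω n (Finset.mem_coe.mpr hn)
  have haeU : ∀ᵐ ω ∂P, |U ω| ≤ N := by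
    filter_upwards [haeB] with ω hω
    rw [hU]
    calc |∑ n ∈ Finset.Icc 1 N, Real.cos (2 * Real.pi * n * l / N) * B n ω|
        ≤ ∑ n ∈ Finset.Icc 1 N, |Real.cos (2 * Real.pi * n * l / N) * B n ω| :=
          Finset.abs_sum_le_sum_abs _ _
      _ ≤ ∑ n ∈ Finset.Icc 1 N, 1 := by
          apply Finset.sum_le_sum
          intro n hn
          rw [abs_mul]
          have hb : |B n ω| ≤ 1 := by
            rcases hω n hn with h | h <;> rw [h] <;> norm_num
          calc |Real.cos (2 * Real.pi * n * l / N)| * |B n ω|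
              ≤ 1 * 1 := mul_le_mul (Real.abs_cos_le_one _) hb (abs_nonneg _) (by norm_num)
            _ = 1 := by norm_num
      _ = N := by rw [Finset.sum_const, Nat.card_Icc, Nat.add_sub_cancel, nsmul_eq_mul, mul_one]
  -- integrability of exp(t U) for every t
  have hint : ∀ t : ℝ, Integrable (fun ω => Real.exp (t * U ω)) P := by
    intro t
    apply Integrable.mono' (integrable_const (Real.exp (|t| * N)))
      ((hUmeas.const_mul t).exp.aestronglyMeasurable)
    filter_upwards [haeU] with ω hω
    rw [Real.norm_eq_abs, Real.abs_exp, Real.exp_le_exp]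
    calc t * U ω ≤ |t * U ω| := le_abs_self _
      _ = |t| * |U ω| := abs_mul _ _
      _ ≤ |t| * N := by
          apply mul_le_mul_of_nonneg_left hω (abs_nonneg t)
  -- lintegral version of the mgf bound
  have hlmgf : ∀ t : ℝ, ∫⁻ ω, ENNReal.ofReal (Real.exp (t * U ω)) ∂P
      ≤ ENNReal.ofReal (Real.exp (t ^ 2 * N / 4)) := by
    intro t
    rw [← ofReal_integral_eq_lintegral_ofReal (hint t)
      (Filter.Eventually.of_forall fun ω => (Real.exp_pos _).le)]
    exact ENNReal.ofReal_le_ofReal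
      (mgf_U_le P N l m hN hl hlN hNl hm hmN B hBmeas hBindep hB1 hB0 U hU t)
  -- main lintegral bound
  set a : ENNReal := ENNReal.ofReal (Real.sqrt (2 * Real.pi)) with hadef
  have ha0 : a ≠ 0 := by
    rw [hadef]
    simp only [ne_eq, ENNReal.ofReal_eq_zero, not_le]
    positivity
  have hatop : a ≠ ⊤ := ENNReal.ofReal_ne_top
  have hpoint : ∀ ω, ENNReal.ofReal (Real.exp ((U ω) ^ 2 / K ^ 2))
      = a⁻¹ * ∫⁻ x : ℝ, ENNReal.ofReal (Real.exp ((Real.sqrt 2 * U ω / K) * x - x ^ 2 / 2)) := by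
    intro ω
    rw [gauss_lintegral_linear (Real.sqrt 2 * U ω / K)]
    have hcsq : (Real.sqrt 2 * U ω / K) ^ 2 / 2 = (U ω) ^ 2 / K ^ 2 := by
      rw [div_pow, mul_pow, Real.sq_sqrt (by norm_num : (0:ℝ) ≤ 2)]
      field_simp
    rw [hcsq, ENNReal.ofReal_mul (Real.sqrt_nonneg _), ← hadef, ← mul_assoc,
      ENNReal.inv_mul_cancel ha0 hatop, one_mul]
  have hFmeas : Measurable (fun q : Ω × ℝ =>
      ENNReal.ofReal (Real.exp ((Real.sqrt 2 * U q.1 / K) * q.2 - q.2 ^ 2 / 2))) := by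
    apply Measurable.ennreal_ofReal
    apply Measurable.exp
    exact ((((hUmeas.comp measurable_fst).const_mul (Real.sqrt 2)).div_const K).mul
      measurable_snd).sub ((measurable_snd.pow_const 2).div_const 2)
  have hinner : ∀ x : ℝ, ∫⁻ ω, ENNReal.ofReal (Real.exp ((Real.sqrt 2 * U ω / K) * x - x ^ 2 / 2)) ∂P
      ≤ ENNReal.ofReal (Real.exp (s * x ^ 2) * Real.exp (-(x ^ 2) / 2)) := by
    intro x
    set t : ℝ := Real.sqrt 2 * x / K with htdef
    have hsplit : ∀ ω, ENNReal.ofReal (Real.exp ((Real.sqrt 2 * U ω / K) * x - x ^ 2 / 2))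
        = ENNReal.ofReal (Real.exp (t * U ω)) * ENNReal.ofReal (Real.exp (-(x ^ 2) / 2)) := by
      intro ω
      rw [← ENNReal.ofReal_mul (Real.exp_pos _).le, ← Real.exp_add]
      congr 1
      rw [htdef]
      field_simp
      ring
    simp_rw [hsplit]
    rw [lintegral_mul_const' _ _ ENNReal.ofReal_ne_top]
    rw [ENNReal.ofReal_mul (Real.exp_pos _).le]
    apply mul_le_mul_left
    calc ∫⁻ ω, ENNReal.ofReal (Real.exp (t * U ω)) ∂P
        ≤ ENNReal.ofReal (Real.exp (t ^ 2 * N / 4)) := hlmgf t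
      _ = ENNReal.ofReal (Real.exp (s * x ^ 2)) := by
          congr 2
          rw [htdef, hsdef, div_pow, mul_pow, Real.sq_sqrt (by norm_num : (0:ℝ) ≤ 2)]
          field_simp
          ring
  have hmain : ∫⁻ ω, ENNReal.ofReal (Real.exp ((U ω) ^ 2 / K ^ 2)) ∂P ≤ ENNReal.ofReal 2 := by
    calc ∫⁻ ω, ENNReal.ofReal (Real.exp ((U ω) ^ 2 / K ^ 2)) ∂P
        = ∫⁻ ω, (a⁻¹ * ∫⁻ x : ℝ, ENNReal.ofReal (Real.exp ((Real.sqrt 2 * U ω / K) * x - x ^ 2 / 2))) ∂P := by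
          exact lintegral_congr fun ω => hpoint ω
      _ = a⁻¹ * ∫⁻ ω, (∫⁻ x : ℝ, ENNReal.ofReal (Real.exp ((Real.sqrt 2 * U ω / K) * x - x ^ 2 / 2))) ∂P :=
          lintegral_const_mul' _ _ (by simp [ha0])
      _ = a⁻¹ * ∫⁻ x : ℝ, (∫⁻ ω, ENNReal.ofReal (Real.exp ((Real.sqrt 2 * U ω / K) * x - x ^ 2 / 2)) ∂P) := by
          rw [lintegral_lintegral_swap hFmeas.aemeasurable]
      _ ≤ a⁻¹ * ∫⁻ x : ℝ, ENNReal.ofReal (Real.exp (s * x ^ 2) * Real.exp (-(x ^ 2) / 2)) := by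
          apply mul_le_mul_right
          exact lintegral_mono hinner
      _ ≤ a⁻¹ * ENNReal.ofReal (2 * Real.sqrt (2 * Real.pi)) := by
          apply mul_le_mul_right
          exact gauss_lintegral_sq s hs38
      _ = ENNReal.ofReal 2 := by
          rw [ENNReal.ofReal_mul (by norm_num : (0:ℝ) ≤ 2), ← hadef, mul_comm (ENNReal.ofReal 2) a,
            ← mul_assoc, ENNReal.inv_mul_cancel ha0 hatop, one_mul]
  have hpart1 : (∫ ω, Real.exp ((U ω) ^ 2 / K ^ 2) ∂P) ≤ 2 := by
    rw [integral_eq_lintegral_of_nonneg_ae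
      (Filter.Eventually.of_forall fun ω => (Real.exp_pos _).le)
      ((hUmeas.pow_const 2).div_const (K ^ 2)).exp.aestronglyMeasurable]
    exact ENNReal.toReal_le_of_le_ofReal (by norm_num) hmain
  refine ⟨hpart1, ?_⟩
  apply csInf_le
  · exact ⟨0, fun x hx => hx.1.le⟩
  · exact ⟨hKpos, hpart1⟩
end

section
/- Let N, l, m be positive integers with l ≤ N − 1, N ≠ 2l and 1 ≤ m ≤ N, and set K₀ = √N·(√(2e) + √(2e + 4))/4. Then E[exp((Ṽ_l(m,N))²/K₀²)] ≤ 2; consequently the sub-Gaussian norm of Ṽ_l(m,N), defined as inf{K > 0 : E[exp((Ṽ_l(m,N))²/K²)] ≤ 2}, is at most √N·(√(2e) + √(2e + 4))/4. -/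
open MeasureTheory ProbabilityTheory Finset

section Aux

open Complex in
lemma exp_sum_zero' (N k : ℕ) (hN : 0 < N) (hk : ¬ (N : ℤ) ∣ (k : ℤ)) :
    ∑ n ∈ Finset.Icc 1 N, Complex.exp (((2 * Real.pi * n * k / N : ℝ) : ℂ) * Complex.I) = 0 := by
  have hNne : (N : ℂ) ≠ 0 := by exact_mod_cast Nat.cast_ne_zero.mpr hN.ne'
  set z : ℂ := Complex.exp (((2 * Real.pi * k / N : ℝ) : ℂ) * Complex.I) with hz
  have hzn : ∀ n : ℕ, Complex.exp (((2 * Real.pi * n * k / N : ℝ) : ℝ) * Complex.I) = z ^ n := by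
    intro n
    rw [hz, ← Complex.exp_nat_mul]
    congr 1
    push_cast
    ring
  have hz1 : z ≠ 1 := by
    rw [hz]
    intro h
    rw [Complex.exp_eq_one_iff] at h
    obtain ⟨n, hn⟩ := h
    apply hk
    rw [show ((n : ℂ) * (2 * ↑Real.pi * Complex.I)) = ((n * (2 * Real.pi) : ℝ) : ℂ) * Complex.I by push_cast; ring] at hn
    have hre : (2 * Real.pi * k / N : ℝ) = n * (2 * Real.pi) := by
      have := mul_right_cancel₀ Complex.I_ne_zero hn
      exact_mod_cast this
    have hNr : (N : ℝ) ≠ 0 := by exact_mod_cast hN.ne'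
    have : (k : ℝ) = n * N := by
      field_simp at hre
      nlinarith [hre, Real.pi_pos]
    exact ⟨n, by exact_mod_cast (mul_comm ((n:ℝ)) ((N:ℝ))) ▸ this⟩
  have hzN : z ^ N = 1 := by
    rw [hz, ← Complex.exp_nat_mul]
    have : (N : ℂ) * (((2 * Real.pi * k / N : ℝ) : ℂ) * Complex.I) = (k : ℤ) * (2 * Real.pi * Complex.I) := by
      push_cast
      field_simp
    rw [this, Complex.exp_int_mul_two_pi_mul_I]
  calc ∑ n ∈ Finset.Icc 1 N, Complex.exp (((2 * Real.pi * n * k / N : ℝ) : ℂ) * Complex.I)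
      = ∑ n ∈ Finset.Icc 1 N, z ^ n := Finset.sum_congr rfl fun n _ => hzn n
    _ = 0 := by
        rw [show Finset.Icc 1 N = Finset.Ico 1 (N+1) by rw [Finset.Ico_add_one_right_eq_Icc],
          Finset.sum_Ico_eq_sum_range]
        simp only [Nat.add_sub_cancel]
        have : ∀ i : ℕ, z ^ (1 + i) = z * z ^ i := fun i => by rw [pow_add, pow_one]
        rw [Finset.sum_congr rfl fun i _ => this i, ← Finset.mul_sum, geom_sum_eq hz1, hzN]
        simp

lemma sin_sum_zero' (N k : ℕ) (hN : 0 < N) (hk : ¬ (N : ℤ) ∣ (k : ℤ)) :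
    ∑ n ∈ Finset.Icc 1 N, Real.sin (2 * Real.pi * n * k / N) = 0 := by
  have h := exp_sum_zero' N k hN hk
  have him := congrArg Complex.im h
  rw [Complex.im_sum] at him
  have e1 : (∑ n ∈ Finset.Icc 1 N, Real.sin (2 * Real.pi * n * k / N)) = ∑ n ∈ Finset.Icc 1 N, (Complex.exp (((2 * Real.pi * n * k / N : ℝ):ℂ) * Complex.I)).im :=
    Finset.sum_congr rfl fun n _ => (Complex.exp_ofReal_mul_I_im _).symm
  rw [e1]
  simpa using him

lemma cos_sum_zero' (N k : ℕ) (hN : 0 < N) (hk : ¬ (N : ℤ) ∣ (k : ℤ)) :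
    ∑ n ∈ Finset.Icc 1 N, Real.cos (2 * Real.pi * n * k / N) = 0 := by
  have h := exp_sum_zero' N k hN hk
  have hre := congrArg Complex.re h
  rw [Complex.re_sum] at hre
  have e1 : (∑ n ∈ Finset.Icc 1 N, Real.cos (2 * Real.pi * n * k / N)) = ∑ n ∈ Finset.Icc 1 N, (Complex.exp (((2 * Real.pi * n * k / N : ℝ):ℂ) * Complex.I)).re :=
    Finset.sum_congr rfl fun n _ => (Complex.exp_ofReal_mul_I_re _).symm
  rw [e1]
  simpa using hre

/-- Per-factor Hoeffding-type bound with constant 1/2, proved algebraically. -/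
lemma factor_bound' (p u : ℝ) (hp0 : 0 ≤ p) (hp1 : p ≤ 1) :
    p * Real.exp u + (1 - p) ≤ Real.exp (p * u + u ^ 2 / 2) := by
  have hq0 : (0:ℝ) ≤ 1 - p := by linarith
  have h1 : Real.exp (-(p * u)) ≤ p * Real.exp (-u) + (1 - p) := by
    have h := Real.geom_mean_le_arith_mean2_weighted hp0 hq0
      (le_of_lt (Real.exp_pos (-u))) zero_le_one (by ring)
    rw [Real.one_rpow, mul_one, mul_one, ← Real.exp_mul] at h
    rw [show -u * p = -(p*u) by ring] at h
    exact h
  have hcosh := Real.cosh_le_exp_half_sq u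
  have h2 : Real.exp u + Real.exp (-u) ≤ 2 * Real.exp (u ^ 2 / 2) := by
    rw [Real.cosh_eq] at hcosh
    linarith
  have hee : Real.exp u * Real.exp (-u) = 1 := by rw [← Real.exp_add]; simp
  have h1e : (1:ℝ) ≤ Real.exp (u ^ 2 / 2) := Real.one_le_exp (by positivity)
  have hprod : (p * Real.exp u + (1 - p)) * (p * Real.exp (-u) + (1 - p))
      ≤ Real.exp (u ^ 2 / 2) := by
    nlinarith [Real.exp_pos u, Real.exp_pos (-u), mul_nonneg hp0 hq0, sq_nonneg p,
      sq_nonneg (1-p), mul_nonneg (mul_nonneg hp0 hq0) (Real.exp_pos u).le,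
      mul_nonneg (mul_nonneg hp0 hq0) (Real.exp_pos (-u)).le]
  have hL0 : 0 ≤ p * Real.exp u + (1 - p) :=
    add_nonneg (mul_nonneg hp0 (Real.exp_pos u).le) hq0
  have hstep : (p * Real.exp u + (1 - p)) * Real.exp (-(p*u)) ≤ Real.exp (u ^ 2 / 2) :=
    le_trans (mul_le_mul_of_nonneg_left h1 hL0) hprod
  calc p * Real.exp u + (1 - p)
      = (p * Real.exp u + (1 - p)) * Real.exp (-(p*u)) * Real.exp (p*u) := by
        rw [mul_assoc, ← Real.exp_add]; simp
    _ ≤ Real.exp (u ^ 2 / 2) * Real.exp (p*u) :=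
        mul_le_mul_of_nonneg_right hstep (Real.exp_pos _).le
    _ = Real.exp (p * u + u ^ 2 / 2) := by rw [← Real.exp_add]; ring_nf

lemma bern_ae' {Ω : Type*} [MeasurableSpace Ω] (P : Measure Ω) [IsProbabilityMeasure P]
    (X : Ω → ℝ) (hX : Measurable X) (p : ℝ) (hp0 : 0 ≤ p) (hp1 : p ≤ 1)
    (h1 : P {ω | X ω = 1} = ENNReal.ofReal p)
    (h0 : P {ω | X ω = 0} = ENNReal.ofReal (1 - p)) :
    ∀ᵐ ω ∂P, X ω = 1 ∨ X ω = 0 := by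
  have hA1 : MeasurableSet {ω | X ω = 1} := hX (measurableSet_singleton 1)
  have hA0 : MeasurableSet {ω | X ω = 0} := hX (measurableSet_singleton 0)
  have hdisj : Disjoint {ω | X ω = 1} {ω | X ω = 0} := by
    rw [Set.disjoint_left]
    intro ω hω1 hω0
    simp only [Set.mem_setOf_eq] at hω1 hω0
    rw [hω1] at hω0; norm_num at hω0
  have hU : P ({ω | X ω = 1} ∪ {ω | X ω = 0}) = 1 := by
    rw [measure_union hdisj hA0, h1, h0, ← ENNReal.ofReal_add hp0 (by linarith)]
    norm_num
  have hcompl := (prob_compl_eq_zero_iff (hA1.union hA0)).mpr hU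
  rw [ae_iff]
  have hset : {ω | ¬(X ω = 1 ∨ X ω = 0)} = ({ω | X ω = 1} ∪ {ω | X ω = 0})ᶜ := by
    ext ω
    simp only [Set.mem_setOf_eq, Set.mem_compl_iff, Set.mem_union, not_or]
  rw [hset]
  exact hcompl

lemma bern_mgf' {Ω : Type*} [MeasurableSpace Ω] (P : Measure Ω) [IsProbabilityMeasure P]
    (X : Ω → ℝ) (hX : Measurable X) (p : ℝ) (hp0 : 0 ≤ p) (hp1 : p ≤ 1)
    (h1 : P {ω | X ω = 1} = ENNReal.ofReal p)
    (h0 : P {ω | X ω = 0} = ENNReal.ofReal (1 - p)) (u : ℝ) :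
    ∫ ω, Real.exp (u * X ω) ∂P = p * Real.exp u + (1 - p) := by
  have hA1 : MeasurableSet {ω | X ω = 1} := hX (measurableSet_singleton 1)
  have hA0 : MeasurableSet {ω | X ω = 0} := hX (measurableSet_singleton 0)
  have hae := bern_ae' P X hX p hp0 hp1 h1 h0
  have heq : (fun ω => Real.exp (u * X ω)) =ᵐ[P]
      (fun ω => Set.indicator {ω | X ω = 1} (fun _ => Real.exp u) ω
        + Set.indicator {ω | X ω = 0} (fun _ => (1:ℝ)) ω) := by
    filter_upwards [hae] with ω hω
    rcases hω with h | h <;>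
      simp [Set.indicator_apply, Set.mem_setOf_eq, h]
  rw [integral_congr_ae heq, integral_add ((integrable_const _).indicator hA1)
    ((integrable_const _).indicator hA0), integral_indicator_const _ hA1,
    integral_indicator_const _ hA0, measureReal_def, measureReal_def, h1, h0, ENNReal.toReal_ofReal hp0,
    ENNReal.toReal_ofReal (by linarith)]
  simp only [smul_eq_mul]
  ring

lemma integrable_exp_linear_quad (a : ℝ) :
    Integrable (fun x : ℝ => Real.exp (a * x - x ^ 2 / 2)) := by
  have h0 : Integrable (fun x : ℝ => Real.exp (-(1/2 : ℝ) * x ^ 2)) :=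
    integrable_exp_neg_mul_sq (by norm_num)
  have h2 := (h0.comp_sub_right a).const_mul (Real.exp (a ^ 2 / 2))
  refine h2.congr (ae_of_all _ fun x => ?_)
  show Real.exp (a ^ 2 / 2) * Real.exp (-(1/2 : ℝ) * (x - a) ^ 2) = Real.exp (a * x - x ^ 2 / 2)
  rw [← Real.exp_add]
  congr 1
  ring

lemma gauss_integral_id (y : ℝ) :
    ∫ x : ℝ, Real.exp (y * x - x ^ 2 / 2) = Real.exp (y ^ 2 / 2) * Real.sqrt (2 * Real.pi) := by
  have h1 : ∀ x : ℝ, Real.exp (y * x - x ^ 2 / 2)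
      = Real.exp (y ^ 2 / 2) * Real.exp (-(1/2 : ℝ) * (x - y) ^ 2) := by
    intro x; rw [← Real.exp_add]; congr 1; ring
  rw [integral_congr_ae (ae_of_all _ h1), integral_const_mul]
  have h2 : ∫ x : ℝ, Real.exp (-(1/2 : ℝ) * (x - y) ^ 2)
      = ∫ x : ℝ, Real.exp (-(1/2 : ℝ) * x ^ 2) :=
    integral_sub_right_eq_self (μ := volume) (fun a => Real.exp (-(1/2 : ℝ) * a ^ 2)) y
  rw [h2, integral_gaussian]
  congr 2
  rw [show Real.pi / (1/2 : ℝ) = 2 * Real.pi by ring]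

end Aux

set_option maxHeartbeats 1000000 in
theorem stmt_12
    {Ω : Type*} [MeasurableSpace Ω] (P : Measure Ω) [IsProbabilityMeasure P]
    (N l m : ℕ) (hN : 0 < N) (hl : 0 < l) (hlN : l ≤ N - 1) (hNl : N ≠ 2 * l) (hm : 1 ≤ m)
    (hmN : m ≤ N)
    (B : ℕ → Ω → ℝ) (hBmeas : ∀ n, Measurable (B n))
    (hBindep : iIndepFun (fun i : Fin N => B (i.1 + 1)) P)
    (hB1 : ∀ n ∈ Finset.Icc 1 N, P {ω | B n ω = 1} = (m : ENNReal) / N)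
    (hB0 : ∀ n ∈ Finset.Icc 1 N, P {ω | B n ω = 0} = 1 - (m : ENNReal) / N)
    (V : Ω → ℝ)
    (hV : V = fun ω => -∑ n ∈ Finset.Icc 1 N, Real.sin (2 * Real.pi * n * l / N) * B n ω) :
    (∫ ω, Real.exp ((V ω) ^ 2 / (Real.sqrt N * (Real.sqrt (2 * Real.exp 1) + Real.sqrt (2 * Real.exp 1 + 4)) / 4) ^ 2) ∂P) ≤ 2 ∧
    sInf {K : ℝ | 0 < K ∧ (∫ ω, Real.exp ((V ω) ^ 2 / K ^ 2) ∂P) ≤ 2}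
      ≤ Real.sqrt N * (Real.sqrt (2 * Real.exp 1) + Real.sqrt (2 * Real.exp 1 + 4)) / 4 := by
  -- basic numeric facts
  have hN2 : 2 ≤ N := by omega
  have hNr : (0:ℝ) < N := by exact_mod_cast hN
  set p : ℝ := (m : ℝ) / N with hp
  have hp0 : 0 ≤ p := by positivity
  have hp1 : p ≤ 1 := by
    rw [hp, div_le_one hNr]; exact_mod_cast hmN
  -- non-divisibility
  have hNdl : ¬ (N : ℤ) ∣ (l : ℤ) := by
    rw [Int.natCast_dvd_natCast]
    intro h
    have := Nat.le_of_dvd hl h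
    omega
  have hNd2l : ¬ (N : ℤ) ∣ ((2 * l : ℕ) : ℤ) := by
    rw [Int.natCast_dvd_natCast]
    intro h
    have h1 : N ≤ 2 * l := Nat.le_of_dvd (by omega) h
    have h2 : 2 * l = N := by
      obtain ⟨c, hc⟩ := h
      rcases c with _ | _ | c
      · omega
      · omega
      · have : N * 2 ≤ N * (c + 1 + 1) := Nat.mul_le_mul_left N (by omega)
        omega
    omega
  -- trig sums
  set a : ℕ → ℝ := fun n => Real.sin (2 * Real.pi * n * l / N) with ha
  have hsin0 : ∑ n ∈ Finset.Icc 1 N, a n = 0 := sin_sum_zero' N l hN hNdl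
  have hsin2 : ∑ n ∈ Finset.Icc 1 N, (a n) ^ 2 = N / 2 := by
    have hc : ∑ n ∈ Finset.Icc 1 N, Real.cos (2 * Real.pi * n * (2 * l : ℕ) / N) = 0 :=
      cos_sum_zero' N (2 * l) hN hNd2l
    have hterm : ∀ n : ℕ, (a n) ^ 2
        = 1/2 - Real.cos (2 * Real.pi * n * (2 * l : ℕ) / N) / 2 := by
      intro n
      rw [ha]
      have := Real.sin_sq (2 * Real.pi * n * l / N)
      have hcs := Real.cos_sq (2 * Real.pi * n * l / N)
      have harg : 2 * (2 * Real.pi * n * l / N) = 2 * Real.pi * n * (2 * l : ℕ) / N := by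
        push_cast; ring
      rw [harg] at hcs
      simp only
      linarith [this, hcs]
    have hc2 : ∑ n ∈ Finset.Icc 1 N, Real.cos (2 * Real.pi * n * (2 * l : ℕ) / N) / 2 = 0 := by
      rw [← Finset.sum_div, hc]
      norm_num
    rw [Finset.sum_congr rfl fun n _ => hterm n, Finset.sum_sub_distrib, hc2,
      Finset.sum_const, Nat.card_Icc]
    simp only [Nat.add_sub_cancel, nsmul_eq_mul, sub_zero]
    ring
  -- measurability of V
  have hVmeas : Measurable V := by
    rw [hV]
    exact (Finset.measurable_sum _ fun n _ => ((hBmeas n).const_mul _)).neg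
  -- Bernoulli facts
  have hB1' : ∀ n ∈ Finset.Icc 1 N, P {ω | B n ω = 1} = ENNReal.ofReal p := by
    intro n hn
    rw [hB1 n hn, hp, ENNReal.ofReal_div_of_pos hNr, ENNReal.ofReal_natCast,
      ENNReal.ofReal_natCast]
  have hB0' : ∀ n ∈ Finset.Icc 1 N, P {ω | B n ω = 0} = ENNReal.ofReal (1 - p) := by
    intro n hn
    rw [hB0 n hn, ENNReal.ofReal_sub _ hp0, ENNReal.ofReal_one, hp,
      ENNReal.ofReal_div_of_pos hNr, ENNReal.ofReal_natCast, ENNReal.ofReal_natCast]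
  clear_value p
  have hBae : ∀ n ∈ Finset.Icc 1 N, ∀ᵐ ω ∂P, B n ω = 1 ∨ B n ω = 0 := fun n hn =>
    bern_ae' P (B n) (hBmeas n) p hp0 hp1 (hB1' n hn) (hB0' n hn)
  -- a.e. bound on V
  have hVbd : ∀ᵐ ω ∂P, |V ω| ≤ N := by
    have hall : ∀ᵐ ω ∂P, ∀ n ∈ Finset.Icc 1 N, B n ω = 1 ∨ B n ω = 0 :=
      (ae_ball_iff (Finset.Icc 1 N).countable_toSet).mpr hBae
    filter_upwards [hall] with ω hω
    rw [hV]
    simp only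
    rw [abs_neg]
    calc |∑ n ∈ Finset.Icc 1 N, a n * B n ω|
        ≤ ∑ n ∈ Finset.Icc 1 N, |a n * B n ω| := Finset.abs_sum_le_sum_abs _ _
      _ ≤ ∑ _n ∈ Finset.Icc 1 N, (1:ℝ) := by
          refine Finset.sum_le_sum fun n hn => ?_
          rcases hω n hn with h | h <;> rw [abs_mul, h]
          · rw [abs_one, mul_one, ha]
            exact abs_le.mpr ⟨Real.neg_one_le_sin _, Real.sin_le_one _⟩
          · simp
      _ = N := by rw [Finset.sum_const, Nat.card_Icc]; simp
  -- integrability of exp (t * V)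
  have hint : ∀ t : ℝ, Integrable (fun ω => Real.exp (t * V ω)) P := by
    intro t
    refine Integrable.mono' (integrable_const (Real.exp (|t| * N)))
      ((hVmeas.const_mul t).exp.aestronglyMeasurable) ?_
    filter_upwards [hVbd] with ω hω
    rw [Real.norm_eq_abs, Real.abs_exp]
    refine Real.exp_le_exp.mpr ?_
    calc t * V ω ≤ |t * V ω| := le_abs_self _
      _ = |t| * |V ω| := abs_mul _ _
      _ ≤ |t| * N := by
          exact mul_le_mul_of_nonneg_left hω (abs_nonneg t)
  -- reindexing Icc 1 N ↔ Fin N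
  have hreindex : ∀ f : ℕ → ℝ, ∑ i : Fin N, f (i.1 + 1) = ∑ n ∈ Finset.Icc 1 N, f n := by
    intro f
    rw [show Finset.Icc 1 N = Finset.Ico 1 (N+1) by rw [Finset.Ico_add_one_right_eq_Icc],
      Finset.sum_Ico_eq_sum_range]
    simp only [Nat.add_sub_cancel]
    rw [← Fin.sum_univ_eq_sum_range (fun i => f (1 + i)) N]
    exact Finset.sum_congr rfl fun i _ => by rw [add_comm]
  -- the MGF bound
  have hmgf : ∀ t : ℝ, ∫ ω, Real.exp (t * V ω) ∂P ≤ Real.exp (t ^ 2 * N / 4) := by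
    intro t
    set c : ℕ → ℝ := fun n => -(a n) with hc
    set Y : Fin N → Ω → ℝ := fun i ω => c (i.1 + 1) * B (i.1 + 1) ω with hY
    have hYmeas : ∀ i, Measurable (Y i) := fun i => (hBmeas _).const_mul _
    have hYindep : iIndepFun Y P := by
      have := hBindep.comp (fun i : Fin N => fun x : ℝ => c (i.1 + 1) * x)
        (fun i => measurable_id.const_mul _)
      exact this
    have hcsum : ∀ ω, ∑ n ∈ Finset.Icc 1 N, c n * B n ω
        = -∑ n ∈ Finset.Icc 1 N, a n * B n ω := by
      intro ω
      simp only [hc]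
      rw [← Finset.sum_neg_distrib]
      exact Finset.sum_congr rfl fun n _ => by ring
    have hVY : V = ∑ i : Fin N, Y i := by
      funext ω
      rw [hV]
      show -∑ n ∈ Finset.Icc 1 N, a n * B n ω = (∑ i : Fin N, Y i) ω
      rw [Finset.sum_apply]
      exact ((hreindex (fun n => c n * B n ω)).trans (hcsum ω)).symm
    have hfac : ∀ i : Fin N, mgf (Y i) P t = p * Real.exp (t * c (i.1 + 1)) + (1 - p) := by
      intro i
      have hmem : i.1 + 1 ∈ Finset.Icc 1 N := by
        simp only [Finset.mem_Icc]
        exact ⟨by omega, by omega⟩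
      have h1 : mgf (Y i) P t = ∫ ω, Real.exp ((t * c (i.1 + 1)) * B (i.1 + 1) ω) ∂P := by
        simp only [mgf, hY]
        exact integral_congr_ae (ae_of_all _ fun ω => by ring_nf)
      rw [h1, bern_mgf' P _ (hBmeas _) p hp0 hp1 (hB1' _ hmem) (hB0' _ hmem)]
    have hVsum : ∫ ω, Real.exp (t * V ω) ∂P = ∏ i : Fin N, mgf (Y i) P t := by
      have : ∫ ω, Real.exp (t * V ω) ∂P = mgf (∑ i : Fin N, Y i) P t := by
        rw [mgf, ← hVY]
      rw [this, hYindep.mgf_sum hYmeas]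
    have hbound : ∀ i : Fin N, mgf (Y i) P t
        ≤ Real.exp (p * (t * c (i.1 + 1)) + (t * c (i.1 + 1)) ^ 2 / 2) := by
      intro i
      rw [hfac i]
      exact factor_bound' p (t * c (i.1 + 1)) hp0 hp1
    have hnn : ∀ i : Fin N, 0 ≤ mgf (Y i) P t := by
      intro i
      rw [hfac i]
      exact add_nonneg (mul_nonneg hp0 (Real.exp_pos _).le) (by linarith)
    have hsum_exp : ∑ i : Fin N, (p * (t * c (i.1 + 1)) + (t * c (i.1 + 1)) ^ 2 / 2)
        = t ^ 2 * N / 4 := by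
      have hrew : ∀ x : ℝ, p * (t * x) + (t * x) ^ 2 / 2
          = (p * t) * x + (t ^ 2 / 2) * x ^ 2 := fun x => by ring
      rw [Finset.sum_congr rfl fun i _ => hrew (c (i.1 + 1))]
      rw [Finset.sum_add_distrib, ← Finset.mul_sum, ← Finset.mul_sum]
      have hc0 : ∑ n ∈ Finset.Icc 1 N, c n = 0 := by
        simp only [hc]
        rw [Finset.sum_neg_distrib, hsin0, neg_zero]
      have hc2' : ∑ n ∈ Finset.Icc 1 N, c n ^ 2 = (N : ℝ) / 2 := by
        simp only [hc, neg_sq]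
        exact hsin2
      have e1 : ∑ i : Fin N, c (i.1 + 1) = 0 := (hreindex c).trans hc0
      have e2 : ∑ i : Fin N, c (i.1 + 1) ^ 2 = (N : ℝ) / 2 :=
        (hreindex (fun n => c n ^ 2)).trans hc2'
      rw [e1, e2]
      ring
    calc ∫ ω, Real.exp (t * V ω) ∂P = ∏ i : Fin N, mgf (Y i) P t := hVsum
      _ ≤ ∏ i : Fin N, Real.exp (p * (t * c (i.1 + 1)) + (t * c (i.1 + 1)) ^ 2 / 2) :=
          Finset.prod_le_prod (fun i _ => hnn i) (fun i _ => hbound i)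
      _ = Real.exp (∑ i : Fin N, (p * (t * c (i.1 + 1)) + (t * c (i.1 + 1)) ^ 2 / 2)) :=
          (Real.exp_sum _ _).symm
      _ = Real.exp (t ^ 2 * N / 4) := by rw [hsum_exp]
  -- constants
  set K : ℝ := Real.sqrt N * (Real.sqrt (2 * Real.exp 1) + Real.sqrt (2 * Real.exp 1 + 4)) / 4
    with hK
  have hsqrtN : (0:ℝ) < Real.sqrt N := Real.sqrt_pos.mpr hNr
  have he1 : (2:ℝ) ≤ Real.sqrt (2 * Real.exp 1) :=
    (Real.le_sqrt' (by norm_num)).mpr (by nlinarith [Real.exp_one_gt_d9])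
  have he2 : (3:ℝ) ≤ Real.sqrt (2 * Real.exp 1 + 4) :=
    (Real.le_sqrt' (by norm_num)).mpr (by nlinarith [Real.exp_one_gt_d9])
  have hKpos : 0 < K := by
    rw [hK]
    positivity
  have hK2 : 4 * N / 3 ≤ K ^ 2 := by
    have hNsq : Real.sqrt N ^ 2 = N := Real.sq_sqrt hNr.le
    have hs12 : (5:ℝ) ≤ Real.sqrt (2 * Real.exp 1) + Real.sqrt (2 * Real.exp 1 + 4) := by
      linarith
    have h25 : (25:ℝ) ≤ (Real.sqrt (2 * Real.exp 1) + Real.sqrt (2 * Real.exp 1 + 4)) ^ 2 := by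
      nlinarith
    rw [hK, div_pow, mul_pow, hNsq]
    have hmul : (N:ℝ) * 25 ≤ N * (Real.sqrt (2 * Real.exp 1) + Real.sqrt (2 * Real.exp 1 + 4)) ^ 2 :=
      mul_le_mul_of_nonneg_left h25 hNr.le
    rw [show ((4:ℝ)^2) = 16 by norm_num]
    linarith
  clear_value K
  set s : ℝ := Real.sqrt 2 / K with hs
  have hs2 : s ^ 2 = 2 / K ^ 2 := by
    rw [hs, div_pow, Real.sq_sqrt (by norm_num : (0:ℝ) ≤ 2)]
  clear_value s
  set b : ℝ := 1/2 - s ^ 2 * N / 4 with hb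
  have hK2pos : (0:ℝ) < K ^ 2 := lt_of_lt_of_le (by positivity) hK2
  have hbge : 1/8 ≤ b := by
    rw [hb, hs2]
    have h1 : 2 / K ^ 2 * N / 4 ≤ 3/8 := by
      rw [div_mul_eq_mul_div, div_div]
      rw [div_le_div_iff₀ (by linarith) (by norm_num)]
      linarith [hK2]
    linarith
  clear_value b
  have hbpos : (0:ℝ) < b := by linarith
  -- pointwise Gaussian identity
  have hpoint : ∀ ω, Real.exp (V ω ^ 2 / K ^ 2)
      = (Real.sqrt (2 * Real.pi))⁻¹ * ∫ x : ℝ, Real.exp (s * V ω * x - x ^ 2 / 2) := by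
    intro ω
    rw [gauss_integral_id (s * V ω)]
    have harg : (s * V ω) ^ 2 / 2 = V ω ^ 2 / K ^ 2 := by
      rw [mul_pow, hs2]
      field_simp
    rw [harg]
    have h2π : (0:ℝ) < Real.sqrt (2 * Real.pi) :=
      Real.sqrt_pos.mpr (by positivity)
    field_simp
  -- the lintegral chain
  have hF : Measurable (Function.uncurry fun ω x =>
      ENNReal.ofReal (Real.exp (s * V ω * x - x ^ 2 / 2))) := by
    apply Measurable.ennreal_ofReal
    apply Measurable.exp
    apply Measurable.sub
    · exact ((hVmeas.comp measurable_fst).const_mul s).mul measurable_snd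
    · exact (measurable_snd.pow_const 2).div_const 2
  have hL : (∫⁻ ω, ENNReal.ofReal (Real.exp (V ω ^ 2 / K ^ 2)) ∂P) ≤ ENNReal.ofReal 2 := by
    have h2π : (0:ℝ) < Real.sqrt (2 * Real.pi) := Real.sqrt_pos.mpr (by positivity)
    calc (∫⁻ ω, ENNReal.ofReal (Real.exp (V ω ^ 2 / K ^ 2)) ∂P)
        = ∫⁻ ω, ENNReal.ofReal ((Real.sqrt (2 * Real.pi))⁻¹)
            * ∫⁻ x, ENNReal.ofReal (Real.exp (s * V ω * x - x ^ 2 / 2)) ∂(volume) ∂P := by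
          refine lintegral_congr fun ω => ?_
          rw [hpoint ω, ENNReal.ofReal_mul (by positivity),
            MeasureTheory.ofReal_integral_eq_lintegral_ofReal (integrable_exp_linear_quad (s * V ω))
              (ae_of_all _ fun x => (Real.exp_pos _).le)]
      _ = ENNReal.ofReal ((Real.sqrt (2 * Real.pi))⁻¹)
            * ∫⁻ ω, ∫⁻ x, ENNReal.ofReal (Real.exp (s * V ω * x - x ^ 2 / 2)) ∂(volume) ∂P :=
          lintegral_const_mul' _ _ ENNReal.ofReal_ne_top
      _ = ENNReal.ofReal ((Real.sqrt (2 * Real.pi))⁻¹)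
            * ∫⁻ x, ∫⁻ ω, ENNReal.ofReal (Real.exp (s * V ω * x - x ^ 2 / 2)) ∂P ∂(volume) := by
          rw [lintegral_lintegral_swap hF.aemeasurable]
      _ ≤ ENNReal.ofReal ((Real.sqrt (2 * Real.pi))⁻¹)
            * ∫⁻ x, ENNReal.ofReal (Real.exp (-b * x ^ 2)) ∂(volume) := by
          refine mul_le_mul_right (lintegral_mono fun x => ?_) _
          calc (∫⁻ ω, ENNReal.ofReal (Real.exp (s * V ω * x - x ^ 2 / 2)) ∂P)
              = ∫⁻ ω, ENNReal.ofReal (Real.exp (-(x ^ 2 / 2)))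
                  * ENNReal.ofReal (Real.exp ((s * x) * V ω)) ∂P := by
                refine lintegral_congr fun ω => ?_
                rw [← ENNReal.ofReal_mul (Real.exp_pos _).le, ← Real.exp_add]
                congr 1
                ring
            _ = ENNReal.ofReal (Real.exp (-(x ^ 2 / 2)))
                  * ∫⁻ ω, ENNReal.ofReal (Real.exp ((s * x) * V ω)) ∂P :=
                lintegral_const_mul' _ _ ENNReal.ofReal_ne_top
            _ = ENNReal.ofReal (Real.exp (-(x ^ 2 / 2)))
                  * ENNReal.ofReal (∫ ω, Real.exp ((s * x) * V ω) ∂P) := by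
                rw [MeasureTheory.ofReal_integral_eq_lintegral_ofReal (hint (s * x))
                  (ae_of_all _ fun ω => (Real.exp_pos _).le)]
            _ ≤ ENNReal.ofReal (Real.exp (-(x ^ 2 / 2)))
                  * ENNReal.ofReal (Real.exp ((s * x) ^ 2 * N / 4)) :=
                mul_le_mul_right (ENNReal.ofReal_le_ofReal (hmgf (s * x))) _
            _ = ENNReal.ofReal (Real.exp (-b * x ^ 2)) := by
                rw [← ENNReal.ofReal_mul (Real.exp_pos _).le, ← Real.exp_add]
                congr 2
                rw [hb]
                ring
      _ = ENNReal.ofReal ((Real.sqrt (2 * Real.pi))⁻¹)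
            * ENNReal.ofReal (Real.sqrt (Real.pi / b)) := by
          rw [← MeasureTheory.ofReal_integral_eq_lintegral_ofReal
            (integrable_exp_neg_mul_sq hbpos) (ae_of_all _ fun x => (Real.exp_pos _).le),
            integral_gaussian]
      _ ≤ ENNReal.ofReal 2 := by
          rw [← ENNReal.ofReal_mul (by positivity)]
          refine ENNReal.ofReal_le_ofReal ?_
          have hπb : Real.pi / b ≤ 8 * Real.pi := by
            rw [div_le_iff₀ hbpos]
            nlinarith [Real.pi_pos, hbge]
          have hsq : Real.sqrt (Real.pi / b) ≤ 2 * Real.sqrt (2 * Real.pi) := by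
            have h8 : Real.sqrt (8 * Real.pi) = 2 * Real.sqrt (2 * Real.pi) := by
              rw [show (8:ℝ) * Real.pi = 4 * (2 * Real.pi) by ring,
                Real.sqrt_mul (by norm_num : (0:ℝ) ≤ 4),
                show Real.sqrt 4 = 2 by
                  rw [show (4:ℝ) = 2^2 by norm_num, Real.sqrt_sq (by norm_num)]]
            rw [← h8]
            exact Real.sqrt_le_sqrt hπb
          calc (Real.sqrt (2 * Real.pi))⁻¹ * Real.sqrt (Real.pi / b)
              ≤ (Real.sqrt (2 * Real.pi))⁻¹ * (2 * Real.sqrt (2 * Real.pi)) := by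
                exact mul_le_mul_of_nonneg_left hsq (by positivity)
            _ = 2 := by field_simp
  -- conclude part 1
  have hEmeas : Measurable fun ω => Real.exp (V ω ^ 2 / K ^ 2) :=
    ((hVmeas.pow_const 2).div_const _).exp
  have hEnn : 0 ≤ᵐ[P] fun ω => Real.exp (V ω ^ 2 / K ^ 2) :=
    ae_of_all _ fun ω => (Real.exp_pos _).le
  have goal1 : (∫ ω, Real.exp (V ω ^ 2 / K ^ 2) ∂P) ≤ 2 := by
    rw [MeasureTheory.integral_eq_lintegral_of_nonneg_ae hEnn hEmeas.aestronglyMeasurable]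
    exact ENNReal.toReal_le_of_le_ofReal (by norm_num) hL
  exact ⟨goal1, csInf_le ⟨0, fun x hx => hx.1.le⟩ ⟨hKpos, goal1⟩⟩
end
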